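/- arXiv:1509.02764 — 6 statements merged into one kernel-verified Lean document; each statement's English description precedes it below -/
import Mathlib

section
/- For every complex number z ≠ 0 and every complex number ν with Re(ν) ≥ 0, the modified Bessel function of the first kind satisfies |I_ν(z)| ≤ (|z|/2)^{Re ν} · e^{|z| − Im(ν)·arg(z)} / |Γ(ν+1)|. -/
open Complex

/-- The modified Bessel function of the first kind, defined by its power series
with the principal branch of `(z/2)^(2k+ν)`. -/
noncomputable def besselI (ν z : ℂ) : ℂ :=
  ∑' k : ℕ, (z / 2) ^ (2 * (k : ℂ) + ν) / ((Nat.factorial k : ℂ) * Complex.Gamma ((k : ℂ) + ν + 1))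

lemma aux_factorial_le (k : ℕ) : ((2 * k).factorial : ℝ) ≤ 4 ^ k * (k.factorial : ℝ) ^ 2 := by
  have h1 : (2 * k).choose k * k.factorial * k.factorial = (2 * k).factorial := by
    have := Nat.choose_mul_factorial_mul_factorial (show k ≤ 2 * k by omega)
    simpa [two_mul, Nat.add_sub_cancel] using this
  have h2 : (2 * k).choose k ≤ 4 ^ k :=
    le_trans (Nat.choose_le_choose k (by omega : 2 * k ≤ 2 * k + 1)) (Nat.choose_middle_le_pow k)
  have := Nat.mul_le_mul_right (k.factorial * k.factorial)
    (h2 : (2 * k).choose k ≤ 4 ^ k)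
  calc ((2 * k).factorial : ℝ) = ((2 * k).choose k * k.factorial * k.factorial : ℕ) := by
        rw [h1]
    _ ≤ ((4 ^ k * (k.factorial * k.factorial) : ℕ) : ℝ) := by
        exact_mod_cast by nlinarith [Nat.mul_le_mul_right (k.factorial * k.factorial) h2]
    _ = 4 ^ k * (k.factorial : ℝ) ^ 2 := by push_cast; ring

lemma aux_sum_le (x : ℝ) (hx : 0 ≤ x) :
    ∑' k : ℕ, (x ^ 2) ^ k / ((k.factorial : ℝ)) ^ 2 ≤ Real.exp (2 * x) := by
  have hg : Summable (fun n : ℕ => (2 * x) ^ n / (n.factorial : ℝ)) :=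
    Real.summable_pow_div_factorial (2 * x)
  have hf : Summable (fun k : ℕ => (x ^ 2) ^ k / ((k.factorial : ℝ)) ^ 2) := by
    apply Summable.of_nonneg_of_le (fun k => by positivity)
      (fun k => ?_) (Real.summable_pow_div_factorial (x ^ 2))
    apply div_le_div_of_nonneg_left (by positivity) (by positivity)
    · nlinarith [show (1:ℝ) ≤ (k.factorial:ℝ) from by exact_mod_cast k.factorial_pos]
  have hexp : Real.exp (2 * x) = ∑' n : ℕ, (2 * x) ^ n / (n.factorial : ℝ) := by
    rw [Real.exp_eq_exp_ℝ, NormedSpace.exp_eq_tsum_div]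
  rw [hexp]
  refine Summable.tsum_le_tsum_of_inj (fun k => 2 * k) (fun a b h => by simpa using h)
    (fun n _ => by positivity) (fun k => ?_) hf hg
  have hfac2 : (0:ℝ) < ((2 * k).factorial : ℝ) := by exact_mod_cast (2 * k).factorial_pos
  have hfac : (0:ℝ) < ((k.factorial : ℝ)) ^ 2 := by positivity
  rw [show (2 * x) ^ (2 * k) = 4 ^ k * (x ^ 2) ^ k by rw [pow_mul]; ring_nf,
    div_le_div_iff₀ hfac hfac2]
  nlinarith [aux_factorial_le k, pow_nonneg (pow_nonneg hx 2) k]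

lemma aux_gamma (ν : ℂ) (hν : 0 ≤ ν.re) (k : ℕ) :
    (k.factorial : ℝ) * ‖Complex.Gamma (ν + 1)‖ ≤
      ‖Complex.Gamma ((k : ℂ) + ν + 1)‖ := by
  induction k with
  | zero => simp
  | succ k ih =>
    have hre : ((k : ℂ) + ν + 1).re = k + ν.re + 1 := by simp
    have hrepos : (0:ℝ) < ((k : ℂ) + ν + 1).re := by
      rw [hre]; positivity
    have hne : ((k : ℂ) + ν + 1) ≠ 0 := by
      intro h; rw [h] at hrepos; simp at hrepos
    have heq : (((k + 1 : ℕ) : ℂ)) + ν + 1 = ((k : ℂ) + ν + 1) + 1 := by push_cast; ring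
    rw [heq, Complex.Gamma_add_one _ hne, norm_mul]
    have h1 : ((k : ℝ) + 1) ≤ ‖(k : ℂ) + ν + 1‖ := by
      calc ((k : ℝ) + 1) ≤ ((k : ℂ) + ν + 1).re := by rw [hre]; linarith
        _ ≤ ‖(k : ℂ) + ν + 1‖ := Complex.re_le_norm _
    calc ((k + 1).factorial : ℝ) * ‖Complex.Gamma (ν + 1)‖
        = ((k : ℝ) + 1) * ((k.factorial : ℝ) * ‖Complex.Gamma (ν + 1)‖) := by
          rw [Nat.factorial_succ]; push_cast; ring
      _ ≤ ‖(k : ℂ) + ν + 1‖ * ‖Complex.Gamma ((k : ℂ) + ν + 1)‖ := by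
          apply mul_le_mul h1 ih (by positivity) (norm_nonneg _)

set_option maxHeartbeats 1000000 in
theorem besselI_abs_bound (z ν : ℂ) (hz : z ≠ 0) (hν : 0 ≤ ν.re) :
    ‖besselI ν z‖ ≤
      (‖z‖ / 2) ^ ν.re * Real.exp (‖z‖ - ν.im * z.arg) /
        ‖Complex.Gamma (ν + 1)‖ := by
  set x : ℝ := ‖z‖ / 2 with hxdef
  have hxpos : 0 < x := by
    have := norm_pos_iff.mpr hz; rw [hxdef]; linarith
  have hG0 : (0:ℝ) < ‖Complex.Gamma (ν + 1)‖ := by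
    refine norm_pos_iff.mpr (Complex.Gamma_ne_zero_of_re_pos ?_)
    simp only [Complex.add_re, Complex.one_re]; linarith
  set C : ℝ := x ^ ν.re * Real.exp (-(ν.im * z.arg)) / ‖Complex.Gamma (ν + 1)‖
    with hCdef
  have hCnn : 0 ≤ C := by
    rw [hCdef]; positivity
  set T : ℕ → ℝ := fun k => C * ((x ^ 2) ^ k / ((k.factorial : ℝ)) ^ 2) with hTdef
  have hz2 : z / 2 ≠ 0 := div_ne_zero hz two_ne_zero
  have habs2 : ‖z / 2‖ = x := by
    rw [norm_div, Complex.norm_two, hxdef]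
  have harg2 : (z / 2).arg = z.arg := by
    have : z / 2 = ((2⁻¹ : ℝ) : ℂ) * z := by push_cast; ring
    rw [this, Complex.arg_real_mul z (by norm_num)]
  have hbound : ∀ k : ℕ, ‖(z / 2) ^ (2 * (k : ℂ) + ν) /
      ((Nat.factorial k : ℂ) * Complex.Gamma ((k : ℂ) + ν + 1))‖ ≤ T k := by
    intro k
    have hGk := aux_gamma ν hν k
    have hGkpos : (0:ℝ) < ‖Complex.Gamma ((k : ℂ) + ν + 1)‖ :=
      lt_of_lt_of_le (by positivity) hGk
    rw [norm_div, norm_mul, Complex.norm_cpow_of_ne_zero hz2, habs2, harg2]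
    have hre : (2 * (k : ℂ) + ν).re = 2 * k + ν.re := by simp
    have him : (2 * (k : ℂ) + ν).im = ν.im := by simp
    rw [hre, him]
    have hxpow : x ^ (2 * (k:ℝ) + ν.re) = (x ^ 2) ^ k * x ^ ν.re := by
      rw [Real.rpow_add hxpos, show (2 * (k:ℝ)) = ((2 * k : ℕ) : ℝ) by push_cast; ring,
        Real.rpow_natCast, pow_mul]
    rw [hxpow]
    have habsnat : ‖(Nat.factorial k : ℂ)‖ = (k.factorial : ℝ) := by
      rw [Complex.norm_natCast]
    rw [habsnat]
    have hlhs : (x ^ 2) ^ k * x ^ ν.re / Real.exp (z.arg * ν.im) /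
        ((k.factorial : ℝ) * ‖Complex.Gamma ((k : ℂ) + ν + 1)‖)
        = (x ^ 2) ^ k * x ^ ν.re * Real.exp (-(ν.im * z.arg)) /
          ((k.factorial : ℝ) * ‖Complex.Gamma ((k : ℂ) + ν + 1)‖) := by
      rw [Real.exp_neg, div_eq_mul_inv ((x ^ 2) ^ k * x ^ ν.re), mul_comm z.arg ν.im]
    rw [hlhs]
    have hrhs : T k = (x ^ 2) ^ k * x ^ ν.re * Real.exp (-(ν.im * z.arg)) /
        (((k.factorial : ℝ)) ^ 2 * ‖Complex.Gamma (ν + 1)‖) := by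
      rw [hTdef, hCdef]; field_simp
    rw [hrhs]
    apply div_le_div_of_nonneg_left (by positivity) (by positivity)
    calc ((k.factorial : ℝ)) ^ 2 * ‖Complex.Gamma (ν + 1)‖
        = (k.factorial : ℝ) * ((k.factorial : ℝ) * ‖Complex.Gamma (ν + 1)‖) := by
          ring
      _ ≤ (k.factorial : ℝ) * ‖Complex.Gamma ((k : ℂ) + ν + 1)‖ := by
          apply mul_le_mul_of_nonneg_left hGk (by positivity)
  have hTsummable : Summable T := by
    apply Summable.mul_left
    apply Summable.of_nonneg_of_le (fun k => by positivity)
      (fun k => ?_) (Real.summable_pow_div_factorial (x ^ 2))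
    apply div_le_div_of_nonneg_left (by positivity) (by positivity)
    calc (k.factorial : ℝ) = (k.factorial : ℝ) * 1 := by ring
      _ ≤ (k.factorial : ℝ) * (k.factorial : ℝ) := by
          exact mul_le_mul_of_nonneg_left (by exact_mod_cast k.factorial_pos) (by positivity)
      _ = ((k.factorial : ℝ)) ^ 2 := by ring
  have hsummable : Summable (fun k : ℕ => ‖(z / 2) ^ (2 * (k : ℂ) + ν) /
      ((Nat.factorial k : ℂ) * Complex.Gamma ((k : ℂ) + ν + 1))‖) :=
    Summable.of_nonneg_of_le (fun k => norm_nonneg _) hbound hTsummable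
  rw [besselI]
  calc ‖∑' k : ℕ, (z / 2) ^ (2 * (k : ℂ) + ν) /
      ((Nat.factorial k : ℂ) * Complex.Gamma ((k : ℂ) + ν + 1))‖
      ≤ ∑' k : ℕ, ‖(z / 2) ^ (2 * (k : ℂ) + ν) /
          ((Nat.factorial k : ℂ) * Complex.Gamma ((k : ℂ) + ν + 1))‖ :=
        norm_tsum_le_tsum_norm hsummable
    _ ≤ ∑' k : ℕ, T k := Summable.tsum_le_tsum hbound hsummable hTsummable
    _ = C * ∑' k : ℕ, (x ^ 2) ^ k / ((k.factorial : ℝ)) ^ 2 := tsum_mul_left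
    _ ≤ C * Real.exp (2 * x) :=
        mul_le_mul_of_nonneg_left (aux_sum_le x hxpos.le) hCnn
    _ = (‖z‖ / 2) ^ ν.re * Real.exp (‖z‖ - ν.im * z.arg) /
          ‖Complex.Gamma (ν + 1)‖ := by
        rw [hCdef, hxdef, div_mul_eq_mul_div, mul_assoc, ← Real.exp_add]
        congr 3
        ring
end

section
/- For every real x > 0 and every real τ ≠ 0, the modified Bessel function of the first kind with purely imaginary order satisfies |I_{iτ}(x)| ≤ e^x · √(sinh(πτ)/(πτ)). -/
set_option maxHeartbeats 1000000

open Complex Real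

lemma normSq_Gamma_one_add_I_mul (τ : ℝ) (hτ : τ ≠ 0) :
    Complex.normSq (Complex.Gamma (1 + Complex.I * τ)) = π * τ / Real.sinh (π * τ) := by
  have hIτ : (Complex.I * τ : ℂ) ≠ 0 := by
    simp [Complex.ext_iff, hτ]
  have h1 : Complex.Gamma (1 + Complex.I * τ) = Complex.I * τ * Complex.Gamma (Complex.I * τ) := by
    rw [add_comm]; exact Complex.Gamma_add_one _ hIτ
  have hconj : (starRingEnd ℂ) (Complex.Gamma (1 + Complex.I * τ)) =
      Complex.Gamma (1 - Complex.I * τ) := by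
    rw [← Complex.Gamma_conj]
    congr 1
    simp [Complex.ext_iff]
  have hrefl := Complex.Gamma_mul_Gamma_one_sub (Complex.I * τ)
  have hsin : Complex.sin (↑π * (Complex.I * τ)) = Real.sinh (π * τ) * Complex.I := by
    have h : (↑π * (Complex.I * τ) : ℂ) = (↑(π * τ) : ℂ) * Complex.I := by push_cast; ring
    rw [h, Complex.sin_mul_I, Complex.ofReal_sinh]
  have hsinh : Real.sinh (π * τ) ≠ 0 := by
    simpa using Real.sinh_ne_zero.mpr (mul_ne_zero Real.pi_ne_zero hτ)
  have key : (Complex.normSq (Complex.Gamma (1 + Complex.I * τ)) : ℂ) =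
      ((π * τ / Real.sinh (π * τ) : ℝ) : ℂ) := by
    rw [← Complex.mul_conj, hconj, h1, mul_assoc, hrefl, hsin]
    have hsinh' : (Real.sinh (π * τ) : ℂ) ≠ 0 := by exact_mod_cast hsinh
    push_cast
    field_simp
  exact_mod_cast key

theorem besselI_imaginary_order_bound (x τ : ℝ) (hx : 0 < x) (hτ : τ ≠ 0) :
    ‖besselI (Complex.I * τ) (x : ℂ)‖ ≤
      Real.exp x * Real.sqrt (Real.sinh (π * τ) / (π * τ)) := by
  set G : ℝ := ‖Complex.Gamma (1 + Complex.I * τ)‖ with hG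
  have hratio : 0 < π * τ / Real.sinh (π * τ) := by
    rcases lt_or_gt_of_ne hτ with h | h
    · have h1 : π * τ < 0 := mul_neg_of_pos_of_neg Real.pi_pos h
      have h2 : Real.sinh (π * τ) < 0 := by simpa using Real.sinh_neg_iff.mpr h1
      exact div_pos_of_neg_of_neg h1 h2
    · have h1 : 0 < π * τ := mul_pos Real.pi_pos h
      exact div_pos h1 (by simpa using Real.sinh_pos_iff.mpr h1)
  have hGsq : G ^ 2 = π * τ / Real.sinh (π * τ) := by
    rw [hG, Complex.sq_norm]
    exact normSq_Gamma_one_add_I_mul τ hτ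
  have hGpos : 0 < G := by
    rcases (norm_nonneg (Complex.Gamma (1 + Complex.I * τ))).lt_or_eq with h | h
    · exact h
    · exfalso; rw [← hG] at h; nlinarith [hGsq]
  -- lower bound on |Γ(k+1+iτ)|
  have hGamma_lb : ∀ k : ℕ, (k.factorial : ℝ) * G ≤
      ‖Complex.Gamma ((k : ℂ) + Complex.I * τ + 1)‖ := by
    intro k
    induction k with
    | zero =>
        have h0 : ((0 : ℕ) : ℂ) + Complex.I * τ + 1 = 1 + Complex.I * τ := by push_cast; ring
        rw [h0]
        simp [hG]
    | succ n ih =>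
        have hz : ((n : ℂ) + Complex.I * τ + 1) ≠ 0 := by
          intro h
          have h' := congrArg Complex.re h
          simp at h'
          linarith [Nat.cast_nonneg (α := ℝ) n]
        have hstep : Complex.Gamma (((n : ℕ) + 1 : ℕ) + Complex.I * τ + 1) =
            ((n : ℂ) + Complex.I * τ + 1) * Complex.Gamma ((n : ℂ) + Complex.I * τ + 1) := by
          rw [← Complex.Gamma_add_one _ hz]
          congr 1
          push_cast; ring
        rw [hstep, norm_mul]
        have habs : (n + 1 : ℝ) ≤ ‖(n : ℂ) + Complex.I * τ + 1‖ := by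
          have h := Complex.abs_re_le_norm ((n : ℂ) + Complex.I * τ + 1)
          have hre : ((n : ℂ) + Complex.I * τ + 1).re = (n : ℝ) + 1 := by
            simp [Complex.mul_re]
          rw [hre] at h
          rw [_root_.abs_of_nonneg (by positivity : (0:ℝ) ≤ (n:ℝ) + 1)] at h
          exact h
        calc ((n + 1).factorial : ℝ) * G = (n + 1 : ℝ) * ((n.factorial : ℝ) * G) := by
              push_cast [Nat.factorial_succ]; ring
          _ ≤ ‖(n : ℂ) + Complex.I * τ + 1‖ *
              ‖Complex.Gamma ((n : ℂ) + Complex.I * τ + 1)‖ :=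
              mul_le_mul habs ih (by positivity) (norm_nonneg _)
  set f : ℕ → ℂ := fun k => ((x : ℂ) / 2) ^ (2 * (k : ℂ) + Complex.I * τ) /
      ((k.factorial : ℂ) * Complex.Gamma ((k : ℂ) + Complex.I * τ + 1)) with hf
  set g : ℕ → ℝ := fun k => x ^ (2 * k) / (2 * k).factorial * G⁻¹ with hg
  -- termwise bound
  have hterm : ∀ k, ‖f k‖ ≤ g k := by
    intro k
    have hx2 : (0 : ℝ) < x / 2 := by linarith
    have hnum : ‖((x : ℂ) / 2) ^ (2 * (k : ℂ) + Complex.I * τ)‖ =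
        (x / 2) ^ (2 * k) := by
      have h : ((x : ℂ) / 2) = ((x / 2 : ℝ) : ℂ) := by push_cast; ring
      rw [h, Complex.norm_cpow_eq_rpow_re_of_pos hx2]
      have hre : (2 * (k : ℂ) + Complex.I * τ).re = ((2 * k : ℕ) : ℝ) := by
        simp [Complex.mul_re]
      rw [hre, Real.rpow_natCast]
    have hfact : ((2 * k).factorial : ℝ) ≤ 4 ^ k * (k.factorial : ℝ) ^ 2 := by
      have h1 : (2 * k).choose k ≤ 4 ^ k :=
        le_trans (Nat.choose_le_choose k (by omega)) (Nat.choose_middle_le_pow k)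
      have h2 : (2 * k).choose k * k.factorial * k.factorial = (2 * k).factorial := by
        have h := Nat.choose_mul_factorial_mul_factorial (show k ≤ 2 * k by omega)
        simpa [two_mul] using h
      have h3 : (2 * k).factorial ≤ 4 ^ k * k.factorial ^ 2 := by
        rw [← h2]; nlinarith [h1, Nat.factorial_pos k]
      exact_mod_cast h3
    have habsf : ‖f k‖ = (x / 2) ^ (2 * k) /
        ((k.factorial : ℝ) * ‖Complex.Gamma ((k : ℂ) + Complex.I * τ + 1)‖) := by
      rw [hf, norm_div, norm_mul, hnum, Complex.norm_natCast]
    rw [habsf, hg]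
    have hkey : ((x : ℝ) / 2) ^ (2 * k) = x ^ (2 * k) / 4 ^ k := by
      rw [div_pow]
      congr 1
      rw [pow_mul]; norm_num
    have hA := hGamma_lb k
    set A : ℝ := ‖Complex.Gamma ((k : ℂ) + Complex.I * τ + 1)‖ with hAdef
    have hApos : 0 < A := lt_of_lt_of_le (by positivity) hA
    calc (x / 2) ^ (2 * k) / ((k.factorial : ℝ) * A)
        = x ^ (2 * k) / (4 ^ k * ((k.factorial : ℝ) * A)) := by
          rw [hkey, div_div]
      _ ≤ x ^ (2 * k) / (((2 * k).factorial : ℝ) * G) := by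
          apply div_le_div_of_nonneg_left (by positivity) (by positivity)
          calc ((2 * k).factorial : ℝ) * G ≤ (4 ^ k * (k.factorial : ℝ) ^ 2) * G :=
                mul_le_mul_of_nonneg_right hfact hGpos.le
            _ = 4 ^ k * ((k.factorial : ℝ) * ((k.factorial : ℝ) * G)) := by ring
            _ ≤ 4 ^ k * ((k.factorial : ℝ) * A) := by
                apply mul_le_mul_of_nonneg_left _ (by positivity)
                exact mul_le_mul_of_nonneg_left hA (by positivity)
      _ = x ^ (2 * k) / ((2 * k).factorial : ℝ) * G⁻¹ := by
          rw [← div_div, div_eq_mul_inv]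
  -- summability
  have hinj : Function.Injective (fun k : ℕ => 2 * k) := fun a b h => by
    simp only at h; omega
  have hh : Summable (fun n : ℕ => x ^ n / (n.factorial : ℝ) * G⁻¹) :=
    (Real.summable_pow_div_factorial x).mul_right _
  have hgsum : Summable g := hh.comp_injective hinj
  have habs_sum : Summable (fun k => ‖f k‖) :=
    Summable.of_nonneg_of_le (fun k => norm_nonneg _) hterm hgsum
  have hexp : Real.exp x = ∑' n : ℕ, x ^ n / (n.factorial : ℝ) := by
    rw [Real.exp_eq_exp_ℝ, NormedSpace.exp_eq_tsum_div]
  have hGinv : G⁻¹ = Real.sqrt (Real.sinh (π * τ) / (π * τ)) := by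
    have hGeq : G = Real.sqrt (π * τ / Real.sinh (π * τ)) := by
      rw [← hGsq, Real.sqrt_sq hGpos.le]
    rw [hGeq, ← Real.sqrt_inv, inv_div]
  have hbessel : besselI (Complex.I * τ) (x : ℂ) = ∑' k, f k := rfl
  have habs_sum' : Summable (fun k => ‖f k‖) := by
    exact habs_sum
  calc ‖besselI (Complex.I * τ) (x : ℂ)‖ ≤ ∑' k, ‖f k‖ := by
        rw [hbessel]
        exact norm_tsum_le_tsum_norm habs_sum'
    _ ≤ ∑' k, g k := Summable.tsum_le_tsum hterm habs_sum hgsum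
    _ ≤ ∑' n : ℕ, x ^ n / (n.factorial : ℝ) * G⁻¹ := by
        apply Summable.tsum_le_tsum_of_inj (fun k : ℕ => 2 * k) hinj
          (fun c _ => by positivity) (fun b => le_refl _) hgsum hh
    _ = Real.exp x * G⁻¹ := by
        rw [tsum_mul_right, hexp]
    _ = Real.exp x * Real.sqrt (Real.sinh (π * τ) / (π * τ)) := by rw [hGinv]
end

section
/- For every real x > 0 and every real τ, |I_{iτ}(x)| ≤ I_0(x) · √(sinh(πτ)/(πτ)), where for τ = 0 the factor √(sinh(πτ)/(πτ)) is interpreted as 1. -/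
open Complex Real

lemma gamma_abs_sq (τ : ℝ) (hτ : τ ≠ 0) :
    (‖Complex.Gamma (1 + Complex.I * τ)‖) ^ 2 = π * τ / Real.sinh (π * τ) := by
  have hiτ : (Complex.I * τ : ℂ) ≠ 0 := by
    simp [Complex.I_ne_zero, Complex.ofReal_ne_zero, hτ]
  have h1 : Complex.Gamma (Complex.I * τ) * Complex.Gamma (1 - Complex.I * τ)
      = π / Complex.sin (π * (Complex.I * τ)) := Complex.Gamma_mul_Gamma_one_sub _
  have h2 : Complex.Gamma (1 + Complex.I * τ) = (Complex.I * τ) * Complex.Gamma (Complex.I * τ) := by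
    rw [add_comm]
    exact Complex.Gamma_add_one _ hiτ
  have h3 : Complex.Gamma (1 - Complex.I * τ) = starRingEnd ℂ (Complex.Gamma (1 + Complex.I * τ)) := by
    rw [← Complex.Gamma_conj]
    congr 1
    simp [map_add, map_mul, Complex.conj_I, sub_eq_add_neg]
  have hsin : Complex.sin (π * (Complex.I * τ)) = Complex.I * Real.sinh (π * τ) := by
    have : (π : ℂ) * (Complex.I * τ) = ((π * τ : ℝ) : ℂ) * Complex.I := by
      push_cast; ring
    rw [this, Complex.sin_mul_I, ← Complex.ofReal_sinh]
    ring
  have hsinh : Real.sinh (π * τ) ≠ 0 := by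
    simp only [ne_eq, Real.sinh_eq_zero]
    exact mul_ne_zero Real.pi_ne_zero hτ
  have hs : (Real.sinh (π * τ) : ℂ) ≠ 0 := Complex.ofReal_ne_zero.mpr hsinh
  have key : Complex.Gamma (1 + Complex.I * τ) * starRingEnd ℂ (Complex.Gamma (1 + Complex.I * τ))
      = ((π * τ / Real.sinh (π * τ) : ℝ) : ℂ) := by
    calc Complex.Gamma (1 + Complex.I * τ) * starRingEnd ℂ (Complex.Gamma (1 + Complex.I * τ))
        = (Complex.I * τ) * (Complex.Gamma (Complex.I * τ) * Complex.Gamma (1 - Complex.I * τ)) := by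
          rw [← h3, h2]; ring
      _ = (Complex.I * τ) * ((π : ℂ) / (Complex.I * Real.sinh (π * τ))) := by rw [h1, hsin]
      _ = ((π : ℂ) * τ * Complex.I) / ((Real.sinh (π * τ) : ℂ) * Complex.I) := by ring
      _ = ((π : ℂ) * τ) / ((Real.sinh (π * τ) : ℂ)) :=
          mul_div_mul_right _ _ Complex.I_ne_zero
      _ = ((π * τ / Real.sinh (π * τ) : ℝ) : ℂ) := by push_cast; ring
  rw [Complex.mul_conj] at key
  have hsq : Complex.normSq (Complex.Gamma (1 + Complex.I * τ)) = π * τ / Real.sinh (π * τ) := by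
    exact_mod_cast key
  rw [Complex.sq_norm]
  exact hsq

lemma gamma_abs_lower (τ : ℝ) (k : ℕ) :
    (Nat.factorial k : ℝ) * ‖Complex.Gamma (1 + Complex.I * τ)‖ ≤
      ‖Complex.Gamma ((k : ℂ) + Complex.I * τ + 1)‖ := by
  induction k with
  | zero =>
    simp [add_comm (Complex.I * (τ:ℂ)) 1]
  | succ k ih =>
    have hre : ((k : ℂ) + Complex.I * τ + 1).re = (k : ℝ) + 1 := by
      simp
    have hne : ((k : ℂ) + Complex.I * τ + 1) ≠ 0 := by
      intro h
      have h0 : ((k : ℂ) + Complex.I * τ + 1).re = 0 := by rw [h]; simp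
      rw [hre] at h0
      have : (0:ℝ) ≤ (k:ℝ) := Nat.cast_nonneg k
      linarith
    have heq : ((k + 1 : ℕ) : ℂ) + Complex.I * τ + 1 = ((k : ℂ) + Complex.I * τ + 1) + 1 := by
      push_cast; ring
    rw [heq, Complex.Gamma_add_one _ hne, norm_mul]
    have habs : (k : ℝ) + 1 ≤ ‖(k : ℂ) + Complex.I * τ + 1‖ := by
      calc (k : ℝ) + 1 = |((k : ℂ) + Complex.I * τ + 1).re| := by rw [hre]; exact (_root_.abs_of_nonneg (by positivity)).symm
      _ ≤ ‖((k : ℂ) + Complex.I * τ + 1)‖ := Complex.abs_re_le_norm _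
    calc ((k + 1).factorial : ℝ) * ‖Complex.Gamma (1 + Complex.I * τ)‖
        = ((k : ℝ) + 1) * ((k.factorial : ℝ) * ‖Complex.Gamma (1 + Complex.I * τ)‖) := by
          rw [Nat.factorial_succ]; push_cast; ring
      _ ≤ ‖(k : ℂ) + Complex.I * τ + 1‖ * ‖Complex.Gamma ((k : ℂ) + Complex.I * τ + 1)‖ := by
          apply mul_le_mul habs ih (by positivity) (by positivity)

set_option maxHeartbeats 1000000 in
theorem besselI_bound_by_besselI_zero (x τ : ℝ) (hx : 0 < x) :
    ‖besselI (Complex.I * τ) (x : ℂ)‖ ≤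
      (besselI 0 (x : ℂ)).re *
        (if τ = 0 then 1 else Real.sqrt (Real.sinh (π * τ) / (π * τ))) := by
  have hc : 0 < x / 2 := by positivity
  set c : ℝ := x / 2 with hc_def
  set a : ℕ → ℝ := fun k => c ^ (2 * k) / (k.factorial : ℝ) ^ 2 with ha_def
  have ha_nonneg : ∀ k, 0 ≤ a k := fun k => by positivity
  have ha_sum : Summable a := by
    refine Summable.of_nonneg_of_le ha_nonneg (fun k => ?_)
      (Real.summable_pow_div_factorial (c ^ 2))
    have h1 : (1 : ℝ) ≤ (k.factorial : ℝ) := by exact_mod_cast k.factorial_pos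
    simp only [ha_def, pow_mul]
    gcongr
    nlinarith
  have hxc : ((x : ℂ) / 2) = ((c : ℝ) : ℂ) := by rw [hc_def]; push_cast; ring
  have hterm0 : ∀ k : ℕ, ((x:ℂ) / 2) ^ (2 * (k : ℂ) + 0) /
      ((k.factorial : ℂ) * Complex.Gamma ((k : ℂ) + 0 + 1)) = ((a k : ℝ) : ℂ) := by
    intro k
    have h2 : (2 * (k : ℂ) + 0) = ((2 * k : ℕ) : ℂ) := by push_cast; ring
    have h3 : Complex.Gamma ((k : ℂ) + 0 + 1) = (k.factorial : ℂ) := by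
      rw [show ((k:ℂ) + 0 + 1) = ((k:ℂ) + 1) by ring, Complex.Gamma_nat_eq_factorial]
    rw [hxc, h2, h3, Complex.cpow_natCast]
    rw [ha_def]
    push_cast
    ring
  have hI0 : besselI 0 (x:ℂ) = ((∑' k, a k : ℝ) : ℂ) := by
    rw [besselI, Complex.ofReal_tsum]
    exact tsum_congr hterm0
  have htsum_nonneg : 0 ≤ ∑' k, a k := tsum_nonneg ha_nonneg
  have hI0re : (besselI 0 (x:ℂ)).re = ∑' k, a k := by rw [hI0, Complex.ofReal_re]
  by_cases hτ : τ = 0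
  · subst hτ
    rw [if_pos rfl, mul_one, hI0re]
    rw [show (Complex.I * ((0:ℝ):ℂ)) = 0 by simp, hI0]
    rw [Complex.norm_real, Real.norm_of_nonneg htsum_nonneg]
  · rw [if_neg hτ]
    set G := ‖Complex.Gamma (1 + Complex.I * τ)‖ with hG_def
    have hGne : Complex.Gamma (1 + Complex.I * τ) ≠ 0 := by
      apply Complex.Gamma_ne_zero_of_re_pos
      simp
    have hG : 0 < G := by
      rw [hG_def]
      exact norm_pos_iff.mpr hGne
    have hGsq := gamma_abs_sq τ hτ
    have hπτ : π * τ ≠ 0 := mul_ne_zero Real.pi_ne_zero hτ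
    have hsinh_ne : Real.sinh (π * τ) ≠ 0 := by
      simp only [ne_eq, Real.sinh_eq_zero]
      exact hπτ
    have hratio : Real.sinh (π * τ) / (π * τ) = (1 / G) ^ 2 := by
      have h' : G ^ 2 * Real.sinh (π * τ) = π * τ := by
        rw [hGsq]; field_simp
      field_simp
      linear_combination h'
    have hsqrt : Real.sqrt (Real.sinh (π * τ) / (π * τ)) = 1 / G := by
      rw [hratio, Real.sqrt_sq (by positivity)]
    have habs_term : ∀ k : ℕ,
        ‖((x:ℂ)/2) ^ (2*(k:ℂ) + Complex.I * τ) /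
          ((k.factorial : ℂ) * Complex.Gamma ((k:ℂ) + Complex.I * τ + 1))‖ ≤ a k / G := by
      intro k
      rw [norm_div, norm_mul]
      have hnum : ‖((x:ℂ)/2) ^ (2*(k:ℂ) + Complex.I*τ)‖ = c ^ (2*k) := by
        rw [hxc, Complex.norm_cpow_eq_rpow_re_of_pos hc]
        have hre2 : (2*(k:ℂ) + Complex.I*τ).re = ((2*k : ℕ) : ℝ) := by simp
        rw [hre2, Real.rpow_natCast]
      rw [hnum, Complex.norm_natCast]
      have hGpos : 0 < (k.factorial : ℝ) * ((k.factorial : ℝ) * G) := by positivity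
      calc c^(2*k) / ((k.factorial:ℝ) * ‖Complex.Gamma ((k:ℂ) + Complex.I*τ + 1)‖)
          ≤ c^(2*k) / ((k.factorial:ℝ) * ((k.factorial:ℝ) * G)) := by
            gcongr
            exact gamma_abs_lower τ k
        _ = a k / G := by
            rw [ha_def]
            field_simp
    have hsum_abs : Summable (fun k : ℕ => ‖((x:ℂ)/2) ^ (2*(k:ℂ) + Complex.I * τ) /
        ((k.factorial : ℂ) * Complex.Gamma ((k:ℂ) + Complex.I * τ + 1))‖) :=
      Summable.of_nonneg_of_le (fun k => norm_nonneg _) habs_term (ha_sum.div_const G)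
    calc ‖besselI (Complex.I * τ) (x:ℂ)‖
        ≤ ∑' k : ℕ, ‖((x:ℂ)/2) ^ (2*(k:ℂ) + Complex.I * τ) /
            ((k.factorial : ℂ) * Complex.Gamma ((k:ℂ) + Complex.I * τ + 1))‖ := by
          rw [besselI]
          have h := norm_tsum_le_tsum_norm (f := fun k : ℕ =>
            ((x:ℂ)/2) ^ (2*(k:ℂ) + Complex.I * τ) /
              ((k.factorial : ℂ) * Complex.Gamma ((k:ℂ) + Complex.I * τ + 1)))
            hsum_abs
          exact h
      _ ≤ ∑' k, a k / G := Summable.tsum_le_tsum habs_term hsum_abs (ha_sum.div_const G)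
      _ = (∑' k, a k) / G := by rw [tsum_div_const]
      _ = (besselI 0 (x:ℂ)).re * (1 / G) := by rw [hI0re]; ring
      _ = (besselI 0 (x:ℂ)).re * Real.sqrt (Real.sinh (π * τ) / (π * τ)) := by rw [hsqrt]
end

section
/- Boundedness of the Lebedev–Skalskaya type transform: if f : (0,∞) → ℂ is integrable, then for every real τ the integral (Ff)(τ) = (√π / cosh(πτ)) ∫_0^∞ e^{−x/2} Re[I_{iτ}(x/2)] f(x) dx converges absolutely and satisfies |(Ff)(τ)| ≤ √π · ∫_0^∞ |f(x)| dx. -/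
open MeasureTheory Set Complex Real

private lemma sinh_le_mul_cosh {t : ℝ} (ht : 0 ≤ t) : Real.sinh t ≤ t * Real.cosh t := by
  refine hasSum_le (fun n => ?_) (Real.hasSum_sinh t) ((Real.hasSum_cosh t).mul_left t)
  rw [mul_div_assoc', ← pow_succ']
  have h1 : (0:ℝ) ≤ t ^ (2*n+1) := by positivity
  have h2 : (0:ℝ) < ((2*n).factorial : ℝ) := by positivity
  have h3 : ((2*n).factorial : ℝ) ≤ ((2*n+1).factorial : ℝ) := by
    exact_mod_cast Nat.factorial_le (Nat.le_succ _)
  gcongr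

private lemma cosh_le_exp {t : ℝ} (ht : 0 ≤ t) : Real.cosh t ≤ Real.exp t := by
  rw [Real.cosh_eq]
  have h := Real.exp_le_exp.2 (show -t ≤ t by linarith)
  linarith

private lemma abs_gamma_pos (τ : ℝ) : 0 < ‖Complex.Gamma (1 + Complex.I * τ)‖ := by
  rw [norm_pos_iff]
  apply Complex.Gamma_ne_zero
  intro m h
  have := congrArg Complex.re h
  simp at this
  linarith [this, Nat.cast_nonneg (α := ℝ) m]

private lemma gamma_arg_ne (τ : ℝ) (k : ℕ) : ((k:ℂ) + Complex.I * τ + 1) ≠ 0 := by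
  intro h
  have := congrArg Complex.re h
  simp at this
  linarith [this, Nat.cast_nonneg (α := ℝ) k]

private lemma fact_mul_le (τ : ℝ) : ∀ k : ℕ,
    (k.factorial : ℝ) * ‖Complex.Gamma (1 + Complex.I * τ)‖ ≤
      ‖Complex.Gamma ((k:ℂ) + Complex.I * τ + 1)‖ := by
  intro k
  induction k with
  | zero =>
    have h : ((0:ℕ):ℂ) + Complex.I * τ + 1 = 1 + Complex.I * τ := by push_cast; ring
    rw [h]; simp
  | succ k ih =>
    have h : (((k+1:ℕ)):ℂ) + Complex.I * τ + 1 = ((k:ℂ) + Complex.I * τ + 1) + 1 := by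
      push_cast; ring
    rw [h, Complex.Gamma_add_one _ (gamma_arg_ne τ k), norm_mul]
    have hre : (k + 1 : ℝ) ≤ ‖(k:ℂ) + Complex.I * τ + 1‖ := by
      have h2 := Complex.abs_re_le_norm ((k:ℂ) + Complex.I * τ + 1)
      have h3 : ((k:ℂ) + Complex.I * τ + 1).re = (k:ℝ) + 1 := by simp
      rw [h3] at h2
      calc (k+1:ℝ) ≤ |(k:ℝ) + 1| := le_abs_self _
        _ ≤ _ := h2
    calc ((k+1).factorial : ℝ) * ‖Complex.Gamma (1 + Complex.I * τ)‖
        = ((k:ℝ)+1) * ((k.factorial : ℝ) * ‖Complex.Gamma (1 + Complex.I * τ)‖) := by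
          push_cast [Nat.factorial_succ]; ring
      _ ≤ ‖(k:ℂ) + Complex.I * τ + 1‖ *
            ‖Complex.Gamma ((k:ℂ) + Complex.I * τ + 1)‖ := by
          apply mul_le_mul hre ih (by positivity)
          exact (norm_nonneg _)


private lemma abs_gamma_conj (σ : ℝ) :
    ‖Complex.Gamma (1 - Complex.I * σ)‖ =
      ‖Complex.Gamma (1 + Complex.I * σ)‖ := by
  have h : (1 - Complex.I * σ) = (starRingEnd ℂ) (1 + Complex.I * σ) := by
    simp [Complex.ext_iff]
  rw [h, Complex.Gamma_conj, Complex.norm_conj]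

private lemma gamma_prod (σ : ℝ) (hσ : 0 < σ) :
    Complex.Gamma (1 + Complex.I * σ) * Complex.Gamma (1 - Complex.I * σ) =
      ((π * σ / Real.sinh (π * σ) : ℝ) : ℂ) := by
  have hs : Real.sinh (π * σ) ≠ 0 := (Real.sinh_pos_iff.2 (by positivity)).ne'
  have hsC : ((Real.sinh (π * σ) : ℝ) : ℂ) ≠ 0 := by exact_mod_cast hs
  have hIσ : (Complex.I * σ) ≠ 0 := by
    simp [Complex.I_ne_zero, Complex.ofReal_ne_zero, hσ.ne']
  have h1 : Complex.Gamma (Complex.I * σ + 1) = Complex.I * σ * Complex.Gamma (Complex.I * σ) :=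
    Complex.Gamma_add_one _ hIσ
  have h2 : Complex.Gamma (Complex.I * σ) * Complex.Gamma (1 - Complex.I * σ) =
      π / Complex.sin (π * (Complex.I * σ)) := Complex.Gamma_mul_Gamma_one_sub _
  have hsin : Complex.sin ((π : ℂ) * (Complex.I * σ)) = ((Real.sinh (π * σ) : ℝ) : ℂ) * Complex.I := by
    have h3 : (π : ℂ) * (Complex.I * σ) = (((π * σ : ℝ)) : ℂ) * Complex.I := by push_cast; ring
    rw [h3, Complex.sin_mul_I, Complex.ofReal_sinh]
  calc Complex.Gamma (1 + Complex.I * σ) * Complex.Gamma (1 - Complex.I * σ)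
      = Complex.Gamma (Complex.I * σ + 1) * Complex.Gamma (1 - Complex.I * σ) := by rw [add_comm]
    _ = Complex.I * σ * (Complex.Gamma (Complex.I * σ) * Complex.Gamma (1 - Complex.I * σ)) := by
        rw [h1]; ring
    _ = Complex.I * σ * ((π : ℂ) / (((Real.sinh (π * σ) : ℝ) : ℂ) * Complex.I)) := by
        rw [h2, hsin]
    _ = ((π * σ / Real.sinh (π * σ) : ℝ) : ℂ) := by
        push_cast
        field_simp [Complex.I_ne_zero]

private lemma one_le_abs_gamma_mul (τ : ℝ) :
    1 ≤ ‖Complex.Gamma (1 + Complex.I * τ)‖ * Real.cosh (π * τ) := by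
  suffices h : ∀ σ : ℝ, 0 ≤ σ →
      1 ≤ ‖Complex.Gamma (1 + Complex.I * σ)‖ * Real.cosh (π * σ) by
    rcases le_or_gt 0 τ with h0 | h0
    · exact h τ h0
    · have h1 := h (-τ) (by linarith)
      have h2 : (1 + Complex.I * ((-τ : ℝ) : ℂ)) = 1 - Complex.I * τ := by push_cast; ring
      rw [h2, abs_gamma_conj, mul_neg, Real.cosh_neg] at h1
      exact h1
  intro σ hσ
  rcases eq_or_lt_of_le hσ with h0 | h0
  · simp [← h0, Complex.Gamma_one]
  · set A := ‖Complex.Gamma (1 + Complex.I * σ)‖ with hA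
    have hApos : 0 < A := by
      rw [hA, norm_pos_iff]
      apply Complex.Gamma_ne_zero
      intro m hm
      have := congrArg Complex.re hm
      simp at this
      linarith [this, Nat.cast_nonneg (α := ℝ) m]
    set t := π * σ with htdef
    have ht : 0 < t := by positivity
    have hsinh : 0 < Real.sinh t := Real.sinh_pos_iff.2 ht
    have hsq : A ^ 2 = t / Real.sinh t := by
      have := congrArg (‖·‖) (gamma_prod σ h0)
      rw [norm_mul, abs_gamma_conj, Complex.norm_real, Real.norm_eq_abs] at this
      rw [← hA] at this
      rw [sq, this, abs_of_pos (by positivity)]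
    have hcosh1 : 1 ≤ Real.cosh t := Real.one_le_cosh t
    have hcoshpos : 0 < Real.cosh t := Real.cosh_pos t
    have hsle : Real.sinh t ≤ t * Real.cosh t := by
      refine hasSum_le (fun n => ?_) (Real.hasSum_sinh t) ((Real.hasSum_cosh t).mul_left t)
      rw [mul_div_assoc', ← pow_succ']
      have h1 : (0:ℝ) ≤ t ^ (2*n+1) := by positivity
      have h2 : (0:ℝ) < ((2*n).factorial : ℝ) := by positivity
      have h3 : ((2*n).factorial : ℝ) ≤ ((2*n+1).factorial : ℝ) := by
        exact_mod_cast Nat.factorial_le (Nat.le_succ _)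
      gcongr
    have hsq1 : 1 ≤ (A * Real.cosh t) ^ 2 := by
      rw [mul_pow, hsq, div_mul_eq_mul_div, le_div_iff₀ hsinh, one_mul]
      calc Real.sinh t ≤ t * Real.cosh t := hsle
        _ = t * Real.cosh t * 1 := by ring
        _ ≤ t * Real.cosh t * Real.cosh t := by
            apply mul_le_mul_of_nonneg_left hcosh1 (by positivity)
        _ = t * Real.cosh t ^ 2 := by ring
    nlinarith [mul_pos hApos hcoshpos]

private lemma fact_two_mul_le' (k : ℕ) : (2*k).factorial ≤ 4^k * (k.factorial * k.factorial) := by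
  have h1 : (2*k).choose k * (k.factorial * k.factorial) = (2*k).factorial := by
    have h := Nat.choose_mul_factorial_mul_factorial (show k ≤ 2*k by omega)
    have h2 : 2*k - k = k := by omega
    rw [h2] at h
    rw [← h]; ring
  have h2 : (2*k).choose k ≤ 4^k :=
    le_trans (Nat.choose_le_choose k (by omega)) (Nat.choose_middle_le_pow k)
  calc (2*k).factorial = (2*k).choose k * (k.factorial * k.factorial) := h1.symm
    _ ≤ 4^k * (k.factorial * k.factorial) := Nat.mul_le_mul_right _ h2

private lemma pow_div_le (x : ℝ) (hx : 0 ≤ x) (k : ℕ) :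
    (x/4)^(2*k) / ((k.factorial : ℝ) * k.factorial) ≤ (x/2)^(2*k) / ((2*k).factorial : ℝ) := by
  rw [div_le_div_iff₀ (by positivity) (by positivity)]
  have key : (((2*k).factorial : ℝ)) ≤ 4^k * ((k.factorial : ℝ) * k.factorial) := by
    exact_mod_cast fact_two_mul_le' k
  have h2k : (x/4:ℝ)^(2*k) = (x/2)^(2*k) / 4^k := by
    have h4 : (2:ℝ)^(2*k) = 4^k := by rw [pow_mul]; norm_num
    rw [show (x/4:ℝ) = (x/2)/2 by ring, div_pow, h4]
  rw [h2k, div_mul_eq_mul_div, div_le_iff₀ (by positivity)]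
  calc (x/2)^(2*k) * ((2*k).factorial : ℝ) ≤ (x/2)^(2*k) * (4^k * ((k.factorial:ℝ) * k.factorial)) := by
        apply mul_le_mul_of_nonneg_left key (by positivity)
    _ = (x/2)^(2*k) * ((k.factorial:ℝ) * k.factorial) * 4^k := by ring

private lemma term_abs (τ x : ℝ) (hx : 0 < x) (k : ℕ) :
    ‖(((x:ℂ)/2) / 2) ^ (2 * (k : ℂ) + Complex.I * τ) /
      ((k.factorial : ℂ) * Complex.Gamma ((k : ℂ) + Complex.I * τ + 1))‖
      = (x/4)^(2*k) / ((k.factorial : ℝ) *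
          ‖Complex.Gamma ((k : ℂ) + Complex.I * τ + 1)‖) := by
  rw [norm_div, norm_mul]
  congr 1
  · have hb : ((x:ℂ)/2)/2 = ((x/4 : ℝ) : ℂ) := by push_cast; ring
    rw [hb, Complex.norm_cpow_eq_rpow_re_of_pos (by positivity)]
    have hre : (2 * (k:ℂ) + Complex.I * τ).re = ((2*k : ℕ) : ℝ) := by push_cast; simp
    rw [hre, Real.rpow_natCast]
  · simp

private lemma key_bound (τ : ℝ) {x : ℝ} (hx : 0 < x) :
    Summable (fun k : ℕ => ‖(((x:ℂ)/2)/2) ^ (2*(k:ℂ) + Complex.I*τ) /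
        ((k.factorial : ℂ) * Complex.Gamma ((k:ℂ) + Complex.I*τ + 1))‖) ∧
      |Real.exp (-x/2) * (besselI (Complex.I*τ) ((x:ℂ)/2)).re| ≤ Real.cosh (π*τ) := by
  set A := ‖Complex.Gamma (1 + Complex.I * τ)‖ with hA
  have hA0 : 0 < A := abs_gamma_pos τ
  set g : ℕ → ℂ := fun k => (((x:ℂ)/2)/2) ^ (2*(k:ℂ) + Complex.I*τ) /
      ((k.factorial : ℂ) * Complex.Gamma ((k:ℂ) + Complex.I*τ + 1)) with hg
  have hle1 : ∀ k, ‖g k‖ ≤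
      ((x/4)^(2*k) / ((k.factorial : ℝ) * k.factorial)) / A := by
    intro k
    rw [hg, term_abs τ x hx k, div_div, mul_assoc]
    gcongr <;> first
      | positivity
      | exact fact_mul_le τ k
      | exact mul_le_mul_of_nonneg_left (fact_mul_le τ k) (by positivity)
  have hsum_m2 : Summable (fun k : ℕ => ((x/2)^(2*k) / ((2*k).factorial : ℝ)) / A) :=
    ((Real.hasSum_cosh (x/2)).summable).div_const A
  have hsum_m1 : Summable (fun k : ℕ => ((x/4)^(2*k) / ((k.factorial : ℝ) * k.factorial)) / A) :=
    Summable.of_nonneg_of_le (fun k => by positivity)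
      (fun k => by gcongr ?_ / A; exact pow_div_le x hx.le k) hsum_m2
  have hsumabs : Summable (fun k => ‖g k‖) :=
    Summable.of_nonneg_of_le (fun k => norm_nonneg _) hle1 hsum_m1
  refine ⟨hsumabs, ?_⟩
  have hb : besselI (Complex.I*τ) ((x:ℂ)/2) = ∑' k, g k := rfl
  have hre : |(besselI (Complex.I*τ) ((x:ℂ)/2)).re| ≤ ∑' k, ‖g k‖ := by
    rw [hb]
    refine le_trans (Complex.abs_re_le_norm _) ?_
    refine le_trans (norm_tsum_le_tsum_norm ?_) ?_
    · simpa using hsumabs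
    · simp
  have ht1 : ∑' k, ‖g k‖ ≤
      ∑' k : ℕ, ((x/4)^(2*k) / ((k.factorial : ℝ) * k.factorial)) / A :=
    Summable.tsum_le_tsum hle1 hsumabs hsum_m1
  have ht2 : ∑' k : ℕ, ((x/4)^(2*k) / ((k.factorial : ℝ) * k.factorial)) / A ≤
      ∑' k : ℕ, ((x/2)^(2*k) / ((2*k).factorial : ℝ)) / A :=
    Summable.tsum_le_tsum (fun k => by gcongr ?_ / A; exact pow_div_le x hx.le k) hsum_m1 hsum_m2
  have ht3 : ∑' k : ℕ, ((x/2)^(2*k) / ((2*k).factorial : ℝ)) / A = Real.cosh (x/2) / A := by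
    rw [tsum_div_const, ← Real.cosh_eq_tsum]
  have hfinal : |(besselI (Complex.I*τ) ((x:ℂ)/2)).re| ≤ Real.cosh (x/2) / A := by
    calc |(besselI (Complex.I*τ) ((x:ℂ)/2)).re| ≤ ∑' k, ‖g k‖ := hre
      _ ≤ _ := ht1
      _ ≤ _ := ht2
      _ = _ := ht3
  rw [abs_mul, abs_of_pos (Real.exp_pos _)]
  calc Real.exp (-x/2) * |(besselI (Complex.I*τ) ((x:ℂ)/2)).re|
      ≤ Real.exp (-x/2) * (Real.cosh (x/2) / A) := by
        exact mul_le_mul_of_nonneg_left hfinal (Real.exp_pos _).le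
    _ ≤ Real.exp (-x/2) * (Real.exp (x/2) / A) := by
        have := cosh_le_exp (show (0:ℝ) ≤ x/2 by linarith)
        gcongr
    _ = 1 / A := by
        rw [← mul_div_assoc, ← Real.exp_add, show -x/2 + x/2 = 0 by ring, Real.exp_zero]
    _ ≤ Real.cosh (π * τ) := by
        rw [div_le_iff₀ hA0, ← mul_comm]
        exact one_le_abs_gamma_mul τ

theorem LS_transform_bounded (f : ℝ → ℂ) (hf : IntegrableOn f (Ioi 0)) (τ : ℝ) :
    IntegrableOn
        (fun x => (Real.exp (-x / 2) * (besselI (Complex.I * τ) ((x : ℂ) / 2)).re : ℝ) • f x)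
        (Ioi 0) ∧
      ‖(Real.sqrt π / Real.cosh (π * τ) : ℝ) •
          ∫ x in Ioi (0 : ℝ),
            (Real.exp (-x / 2) * (besselI (Complex.I * τ) ((x : ℂ) / 2)).re : ℝ) • f x‖ ≤
        Real.sqrt π * ∫ x in Ioi (0 : ℝ), ‖f x‖ := by
  have hcosh : 0 < Real.cosh (π * τ) := Real.cosh_pos (π * τ)
  set w : ℝ → ℝ := fun x => Real.exp (-x / 2) * (besselI (Complex.I * τ) ((x : ℂ) / 2)).re
    with hw
  have hbd : ∀ x ∈ Ioi (0:ℝ), |w x| ≤ Real.cosh (π * τ) := fun x hx => (key_bound τ hx).2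
  -- measurability of the Bessel factor
  have hmeas : AEMeasurable (fun x : ℝ => besselI (Complex.I * τ) ((x : ℂ) / 2))
      (volume.restrict (Ioi 0)) := by
    apply aemeasurable_of_tendsto_metrizable_ae Filter.atTop
      (f := fun n (x : ℝ) => ∑ k ∈ Finset.range n,
        (((x:ℂ)/2)/2) ^ (2*(k:ℂ) + Complex.I*τ) /
          ((k.factorial : ℂ) * Complex.Gamma ((k:ℂ) + Complex.I*τ + 1)))
    · intro n
      apply Finset.aemeasurable_fun_sum
      intro k _
      apply ContinuousOn.aemeasurable ?_ measurableSet_Ioi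
      intro x hx
      apply ContinuousAt.continuousWithinAt
      apply ContinuousAt.div_const
      have hc : ContinuousAt (fun z : ℂ => z ^ (2*(k:ℂ) + Complex.I*τ)) (((x:ℂ)/2)/2) := by
        apply continuousAt_cpow_const
        rw [Complex.mem_slitPlane_iff]
        left
        have hb : ((x:ℂ)/2)/2 = ((x/4 : ℝ) : ℂ) := by push_cast; ring
        rw [hb, Complex.ofReal_re]
        have : (0:ℝ) < x := hx
        positivity
      have hin : Continuous (fun y : ℝ => ((y:ℂ)/2)/2) := by continuity
      exact ContinuousAt.comp (f := fun y : ℝ => ((y:ℂ)/2)/2) hc hin.continuousAt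
    · filter_upwards [ae_restrict_mem measurableSet_Ioi] with x hx
      have hs : Summable (fun k : ℕ => (((x:ℂ)/2)/2) ^ (2*(k:ℂ) + Complex.I*τ) /
          ((k.factorial : ℂ) * Complex.Gamma ((k:ℂ) + Complex.I*τ + 1))) := by
        apply Summable.of_norm
        simpa using (key_bound τ hx).1
      exact hs.hasSum.tendsto_sum_nat
  have hwmeas : AEMeasurable w (volume.restrict (Ioi 0)) := by
    apply AEMeasurable.mul
    · exact (Real.continuous_exp.comp (by fun_prop)).aemeasurable
    · exact Complex.measurable_re.comp_aemeasurable hmeas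
  have hFmeas : AEStronglyMeasurable (fun x => w x • f x) (volume.restrict (Ioi 0)) :=
    hwmeas.aestronglyMeasurable.smul hf.aestronglyMeasurable
  have hInt : IntegrableOn (fun x => w x • f x) (Ioi 0) := by
    apply Integrable.mono' (hf.norm.const_mul (Real.cosh (π * τ))) hFmeas
    filter_upwards [ae_restrict_mem measurableSet_Ioi] with x hx
    rw [norm_smul, Real.norm_eq_abs]
    exact mul_le_mul_of_nonneg_right (hbd x hx) (norm_nonneg _)
  refine ⟨hInt, ?_⟩
  have hnorm : ‖∫ x in Ioi (0:ℝ), w x • f x‖ ≤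
      Real.cosh (π * τ) * ∫ x in Ioi (0:ℝ), ‖f x‖ := by
    calc ‖∫ x in Ioi (0:ℝ), w x • f x‖ ≤ ∫ x in Ioi (0:ℝ), ‖w x • f x‖ :=
          norm_integral_le_integral_norm _
      _ ≤ ∫ x in Ioi (0:ℝ), Real.cosh (π * τ) * ‖f x‖ := by
          apply integral_mono_ae hInt.norm (hf.norm.const_mul _)
          filter_upwards [ae_restrict_mem measurableSet_Ioi] with x hx
          rw [norm_smul, Real.norm_eq_abs]
          exact mul_le_mul_of_nonneg_right (hbd x hx) (norm_nonneg _)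
      _ = Real.cosh (π * τ) * ∫ x in Ioi (0:ℝ), ‖f x‖ := by rw [integral_const_mul]
  have hc0 : 0 ≤ Real.sqrt π / Real.cosh (π * τ) := by positivity
  have habs : ‖(Real.sqrt π / Real.cosh (π * τ) : ℝ) •
      ∫ x in Ioi (0:ℝ), w x • f x‖ =
      (Real.sqrt π / Real.cosh (π * τ)) * ‖∫ x in Ioi (0:ℝ), w x • f x‖ := by
    rw [norm_smul, Real.norm_eq_abs, _root_.abs_of_nonneg hc0]
  have hfeq : (∫ x in Ioi (0:ℝ), ‖f x‖) = ∫ x in Ioi (0:ℝ), ‖f x‖ := rfl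
  rw [habs, hfeq]
  calc (Real.sqrt π / Real.cosh (π * τ)) * ‖∫ x in Ioi (0:ℝ), w x • f x‖
      ≤ (Real.sqrt π / Real.cosh (π * τ)) *
          (Real.cosh (π * τ) * ∫ x in Ioi (0:ℝ), ‖f x‖) :=
        mul_le_mul_of_nonneg_left hnorm hc0
    _ = Real.sqrt π * ∫ x in Ioi (0:ℝ), ‖f x‖ := by
        rw [← mul_assoc, div_mul_cancel₀ _ hcosh.ne']
end

section
/- Boundedness of the transform G: if g : ℝ → ℂ satisfies ∫_{−∞}^∞ |g(τ)| / √(cosh(πτ)) dτ < ∞, then for every x > 0 the integral (Gg)(x) = √π · e^{−x/2} ∫_{−∞}^∞ Re[I_{iτ}(x/2)] · g(τ)/cosh(πτ) dτ converges absolutely and |(Gg)(x)| ≤ √π · ∫_{−∞}^∞ |g(τ)|/√(cosh(πτ)) dτ. -/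
open MeasureTheory Complex Real

lemma aux_sinh_le (y : ℝ) (hy : 0 ≤ y) : Real.sinh y ≤ y * Real.cosh y := by
  refine hasSum_le (fun n => ?_) (Real.hasSum_sinh y) ((Real.hasSum_cosh y).mul_left y)
  rw [mul_div_assoc', ← pow_succ']
  have h1 : (0:ℝ) ≤ y ^ (2*n+1) := by positivity
  have h2 : ((2*n).factorial : ℝ) ≤ ((2*n+1).factorial : ℝ) :=
    Nat.cast_le.mpr (Nat.factorial_le (Nat.le_succ _))
  have h3 : (0:ℝ) < ((2*n).factorial : ℝ) := by positivity
  exact div_le_div_of_nonneg_left h1 h3 h2 |>.trans_eq rfl |> (fun h => by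
    exact div_le_div_of_nonneg_left h1 h3 h2)

lemma aux_fact2 (k : ℕ) : ((2*k).factorial : ℝ) ≤ 4^k * (k.factorial : ℝ)^2 := by
  induction k with
  | zero => simp
  | succ n ih =>
    have h : 2 * (n+1) = (2*n+1) + 1 := by ring
    rw [h, Nat.factorial_succ, Nat.factorial_succ, Nat.factorial_succ]
    push_cast
    have hfac : (0:ℝ) ≤ ((2*n).factorial : ℝ) := by positivity
    have h2 : ((2*n:ℝ)+1) * ((2*n).factorial:ℝ) ≤ ((2*n:ℝ)+2) * (4^n*(n.factorial:ℝ)^2) :=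
      mul_le_mul (by linarith) ih hfac (by linarith)
    calc ((2*n:ℝ)+1+1) * (((2*n:ℝ)+1) * (2*n).factorial)
        ≤ ((2*n:ℝ)+2)*(((2*n:ℝ)+2) * (4^n * (n.factorial:ℝ)^2)) := by
          have := mul_le_mul_of_nonneg_left h2 (show (0:ℝ) ≤ (2*n:ℝ)+2 by linarith)
          linarith
      _ = 4^(n+1) * (((n:ℝ)+1) * n.factorial)^2 := by ring

lemma aux_gamma_sq (τ : ℝ) (hτ : τ ≠ 0) :
    (‖Complex.Gamma (1 + Complex.I * τ)‖)^2 = π * τ / Real.sinh (π * τ) := by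
  have hsinh : Real.sinh (π * τ) ≠ 0 := by
    simp [Real.sinh_eq_zero, Real.pi_ne_zero, hτ, mul_ne_zero Real.pi_ne_zero hτ]
  have hIτ : Complex.I * τ ≠ 0 := by
    simp [Complex.I_ne_zero, Complex.ofReal_ne_zero, hτ]
  have hconj : (starRingEnd ℂ) (Complex.Gamma (1 + Complex.I * τ)) =
      Complex.Gamma (1 - Complex.I * τ) := by
    rw [← Complex.Gamma_conj]
    congr 1
    simp [map_add, Complex.conj_I, Complex.conj_ofReal, sub_eq_add_neg]
  have key : Complex.Gamma (1 + Complex.I * τ) * Complex.Gamma (1 - Complex.I * τ) =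
      ((π * τ / Real.sinh (π * τ) : ℝ) : ℂ) := by
    have h1 : Complex.Gamma (1 + Complex.I * τ) = Complex.I * τ * Complex.Gamma (Complex.I * τ) := by
      rw [add_comm, Complex.Gamma_add_one _ hIτ]
    rw [h1, mul_assoc, Complex.Gamma_mul_Gamma_one_sub (Complex.I * τ)]
    have hsin : Complex.sin (π * (Complex.I * τ)) = Real.sinh (π * τ) * Complex.I := by
      rw [show (π : ℂ) * (Complex.I * τ) = ((π * τ : ℝ) : ℂ) * Complex.I by push_cast; ring,
        Complex.sin_mul_I, Complex.ofReal_sinh]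
    rw [hsin]
    have hs : ((Real.sinh (π * τ) : ℝ) : ℂ) ≠ 0 := Complex.ofReal_ne_zero.mpr hsinh
    rw [mul_div_assoc', Complex.ofReal_div, Complex.ofReal_mul,
      div_eq_div_iff (mul_ne_zero hs Complex.I_ne_zero) hs]
    ring
  have := Complex.mul_conj (Complex.Gamma (1 + Complex.I * τ))
  rw [hconj] at this
  have h2 : ((Complex.normSq (Complex.Gamma (1 + Complex.I * τ)) : ℝ) : ℂ) =
      ((π * τ / Real.sinh (π * τ) : ℝ) : ℂ) := by rw [← this, key]
  have h3 := Complex.ofReal_inj.mp h2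
  rw [← h3, Complex.sq_norm]

lemma aux_gamma_lb (τ : ℝ) :
    1 / Real.sqrt (Real.cosh (π * τ)) ≤ ‖Complex.Gamma (1 + Complex.I * τ)‖ := by
  rcases eq_or_ne τ 0 with rfl | hτ
  · simp [Complex.Gamma_one]
  · have hcosh : 0 < Real.cosh (π * τ) := Real.cosh_pos _
    have hkey : 1 / Real.cosh (π * τ) ≤ π * τ / Real.sinh (π * τ) := by
      have habs : π * τ / Real.sinh (π * τ) = π * |τ| / Real.sinh (π * |τ|) := by
        rcases abs_cases τ with ⟨h1, _⟩ | ⟨h1, _⟩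
        · rw [h1]
        · rw [h1, mul_neg, Real.sinh_neg, neg_div_neg_eq]
      have hτ' : 0 < |τ| := abs_pos.mpr hτ
      have hy : 0 < π * |τ| := by positivity
      have hs : 0 < Real.sinh (π * |τ|) := by rwa [Real.sinh_pos_iff]
      have hc : Real.cosh (π * τ) = Real.cosh (π * |τ|) := by
        rcases abs_cases τ with ⟨h1, _⟩ | ⟨h1, _⟩
        · rw [h1]
        · rw [h1, mul_neg, Real.cosh_neg]
      rw [habs, hc]
      rw [div_le_div_iff₀ (Real.cosh_pos _) hs]
      have := aux_sinh_le (π * |τ|) hy.le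
      linarith
    have h2 := (aux_gamma_sq τ hτ).symm ▸ hkey
    -- h2 : 1 / cosh ≤ abs^2
    have h3 : Real.sqrt (1 / Real.cosh (π * τ)) ≤
        Real.sqrt ((‖Complex.Gamma (1 + Complex.I * τ)‖)^2) :=
      Real.sqrt_le_sqrt (by rw [aux_gamma_sq τ hτ]; exact hkey)
    rw [Real.sqrt_sq (norm_nonneg _), one_div, Real.sqrt_inv, ← one_div] at h3
    exact h3

lemma aux_gamma_fact (τ : ℝ) (k : ℕ) :
    (k.factorial : ℝ) * ‖Complex.Gamma (1 + Complex.I * τ)‖ ≤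
      ‖Complex.Gamma ((k : ℂ) + Complex.I * τ + 1)‖ := by
  induction k with
  | zero =>
    rw [show ((0:ℕ):ℂ) + Complex.I*τ + 1 = 1 + Complex.I*τ by push_cast; ring]
    simp
  | succ n ih =>
    have hne : (n : ℂ) + Complex.I * τ + 1 ≠ 0 := by
      intro h
      have := congrArg Complex.re h
      simp [Complex.add_re] at this
      linarith [Nat.cast_nonneg (α := ℝ) n]
    have heq : ((n + 1 : ℕ) : ℂ) + Complex.I * τ + 1 = ((n : ℂ) + Complex.I * τ + 1) + 1 := by
      push_cast; ring
    rw [heq, Complex.Gamma_add_one _ hne, norm_mul]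
    have habs : ((n : ℝ) + 1) ≤ ‖(n : ℂ) + Complex.I * τ + 1‖ := by
      have := Complex.abs_re_le_norm ((n : ℂ) + Complex.I * τ + 1)
      have hre : ((n : ℂ) + Complex.I * τ + 1).re = (n : ℝ) + 1 := by simp
      rw [hre] at this
      calc ((n:ℝ)+1) ≤ |(n:ℝ)+1| := le_abs_self _
        _ ≤ _ := this
    calc ((n+1).factorial : ℝ) * ‖Complex.Gamma (1 + Complex.I * τ)‖
        = ((n:ℝ)+1) * ((n.factorial : ℝ) * ‖Complex.Gamma (1 + Complex.I * τ)‖) := by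
          rw [Nat.factorial_succ]; push_cast; ring
      _ ≤ ‖(n : ℂ) + Complex.I * τ + 1‖ *
            ‖Complex.Gamma ((n : ℂ) + Complex.I * τ + 1)‖ := by
          apply mul_le_mul habs ih (by positivity) (norm_nonneg _)

-- the terms
noncomputable def bterm (x τ : ℝ) (k : ℕ) : ℂ :=
  ((x : ℂ) / 2 / 2) ^ (2 * (k : ℂ) + Complex.I * τ) /
    ((Nat.factorial k : ℂ) * Complex.Gamma ((k : ℂ) + Complex.I * τ + 1))

lemma bterm_abs_le (x τ : ℝ) (hx : 0 < x) (k : ℕ) :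
    ‖bterm x τ k‖ ≤
      (x/2)^(2*k) / ((2*k).factorial : ℝ) * Real.sqrt (Real.cosh (π * τ)) := by
  have hA : 0 < ‖Complex.Gamma (1 + Complex.I * τ)‖ :=
    lt_of_lt_of_le (by positivity) (aux_gamma_lb τ)
  have hAinv : 1 / ‖Complex.Gamma (1 + Complex.I * τ)‖ ≤
      Real.sqrt (Real.cosh (π * τ)) := by
    rw [div_le_iff₀ hA]
    have h := mul_le_mul_of_nonneg_left (aux_gamma_lb τ) (Real.sqrt_nonneg (Real.cosh (π * τ)))
    have hc : 0 < Real.sqrt (Real.cosh (π * τ)) := Real.sqrt_pos.mpr (Real.cosh_pos _)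
    rw [mul_one_div, div_self hc.ne'] at h
    linarith [mul_comm (Real.sqrt (Real.cosh (π * τ))) (‖Complex.Gamma (1 + Complex.I * τ)‖)]
  have hnum : ‖((x : ℂ) / 2 / 2) ^ (2 * (k : ℂ) + Complex.I * τ)‖ = (x/4)^(2*k) := by
    have hb : ((x : ℂ) / 2 / 2) = ((x/4 : ℝ) : ℂ) := by push_cast; ring
    rw [hb, Complex.norm_cpow_eq_rpow_re_of_pos (by linarith : (0:ℝ) < x/4)]
    have : (2 * (k : ℂ) + Complex.I * τ).re = (2*k : ℝ) := by simp
    rw [this]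
    rw [show ((2*k : ℝ)) = ((2*k : ℕ) : ℝ) by push_cast; ring, Real.rpow_natCast]
  have hden : (k.factorial : ℝ) * ((k.factorial : ℝ) * ‖Complex.Gamma (1 + Complex.I * τ)‖)
      ≤ ‖(Nat.factorial k : ℂ) * Complex.Gamma ((k : ℂ) + Complex.I * τ + 1)‖ := by
    rw [norm_mul]
    have h1 : ‖(Nat.factorial k : ℂ)‖ = (k.factorial : ℝ) := by
      rw [Complex.norm_natCast]
    rw [h1]
    exact mul_le_mul_of_nonneg_left (aux_gamma_fact τ k) (by positivity)
  have hterm : ‖bterm x τ k‖ ≤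
      (x/4)^(2*k) / ((k.factorial : ℝ)^2 * ‖Complex.Gamma (1 + Complex.I * τ)‖) := by
    rw [bterm, norm_div, hnum]
    apply div_le_div_of_nonneg_left (by positivity) (by positivity) ?_
    calc (k.factorial : ℝ)^2 * ‖Complex.Gamma (1 + Complex.I * τ)‖
        = (k.factorial : ℝ) * ((k.factorial : ℝ) * ‖Complex.Gamma (1 + Complex.I * τ)‖) := by ring
      _ ≤ _ := hden
  refine hterm.trans ?_
  have hstep : (x/4)^(2*k) / ((k.factorial : ℝ)^2 * ‖Complex.Gamma (1 + Complex.I * τ)‖)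
      ≤ (x/2)^(2*k) / ((2*k).factorial : ℝ) * (1 / ‖Complex.Gamma (1 + Complex.I * τ)‖) := by
    rw [div_mul_div_comm, mul_one, div_le_div_iff₀ (by positivity) (by positivity)]
    have hf2 := aux_fact2 k
    have hx4 : (x/4)^(2*k) * ((2*k).factorial : ℝ) ≤ (x/2)^(2*k) * (k.factorial:ℝ)^2 := by
      have he : (x/4)^(2*k) = (x/2)^(2*k) / 4^k := by
        rw [eq_div_iff (by positivity : ((4:ℝ)^k) ≠ 0),
          show (4:ℝ)^k = 2^(2*k) by rw [pow_mul]; norm_num, ← mul_pow,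
          show (x/4*2 : ℝ) = x/2 by ring]
      rw [he, div_mul_eq_mul_div, div_le_iff₀ (by positivity : (0:ℝ) < 4^k)]
      calc (x/2)^(2*k) * ((2*k).factorial : ℝ) ≤ (x/2)^(2*k) * (4^k * (k.factorial:ℝ)^2) :=
            mul_le_mul_of_nonneg_left hf2 (by positivity)
        _ = (x/2)^(2*k) * (k.factorial:ℝ)^2 * 4^k := by ring
    calc (x/4)^(2*k) * (((2*k).factorial : ℝ) * ‖Complex.Gamma (1 + Complex.I * τ)‖)
        = ((x/4)^(2*k) * ((2*k).factorial : ℝ)) * ‖Complex.Gamma (1 + Complex.I * τ)‖ := by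
          ring
      _ ≤ ((x/2)^(2*k) * (k.factorial:ℝ)^2) * ‖Complex.Gamma (1 + Complex.I * τ)‖ :=
          mul_le_mul_of_nonneg_right hx4 (norm_nonneg _)
      _ = (x/2)^(2*k) * ((k.factorial:ℝ)^2 * ‖Complex.Gamma (1 + Complex.I * τ)‖) := by
          ring
  refine hstep.trans ?_
  exact mul_le_mul_of_nonneg_left hAinv (by positivity)
lemma majorant_hasSum (x τ : ℝ) :
    HasSum (fun k : ℕ => (x/2)^(2*k) / ((2*k).factorial : ℝ) * Real.sqrt (Real.cosh (π * τ)))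
      (Real.cosh (x/2) * Real.sqrt (Real.cosh (π * τ))) :=
  (Real.hasSum_cosh (x/2)).mul_right _

lemma bterm_abs_summable (x τ : ℝ) (hx : 0 < x) :
    Summable (fun k : ℕ => ‖bterm x τ k‖) :=
  Summable.of_nonneg_of_le (fun k => norm_nonneg _) (bterm_abs_le x τ hx)
    (majorant_hasSum x τ).summable

lemma bterm_summable (x τ : ℝ) (hx : 0 < x) : Summable (fun k : ℕ => bterm x τ k) := by
  apply Summable.of_norm
  exact bterm_abs_summable x τ hx

lemma bessel_eq_tsum (x τ : ℝ) :
    besselI (Complex.I * τ) ((x : ℂ)/2) = ∑' k : ℕ, bterm x τ k := rfl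

lemma bessel_abs_le (x τ : ℝ) (hx : 0 < x) :
    ‖besselI (Complex.I * τ) ((x : ℂ)/2)‖ ≤
      Real.exp (x/2) * Real.sqrt (Real.cosh (π * τ)) := by
  rw [bessel_eq_tsum]
  have hsn : Summable fun k : ℕ => ‖bterm x τ k‖ := by
    exact bterm_abs_summable x τ hx
  have h1 : ‖∑' k : ℕ, bterm x τ k‖ ≤ ∑' k : ℕ, ‖bterm x τ k‖ := by
    have := norm_tsum_le_tsum_norm hsn
    exact this
  refine h1.trans ?_
  have h2 : ∑' k : ℕ, ‖bterm x τ k‖ ≤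
      Real.cosh (x/2) * Real.sqrt (Real.cosh (π * τ)) := by
    rw [← (majorant_hasSum x τ).tsum_eq]
    exact Summable.tsum_le_tsum (bterm_abs_le x τ hx) (bterm_abs_summable x τ hx)
      (majorant_hasSum x τ).summable
  refine h2.trans ?_
  have hce : Real.cosh (x/2) ≤ Real.exp (x/2) := by
    rw [Real.cosh_eq]
    have := Real.exp_le_exp.mpr (show -(x/2) ≤ x/2 by linarith)
    linarith
  exact mul_le_mul_of_nonneg_right hce (Real.sqrt_nonneg _)

lemma bterm_measurable (x : ℝ) (hx : 0 < x) (k : ℕ) :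
    Measurable (fun τ : ℝ => bterm x τ k) := by
  have hne : ((x : ℂ)/2/2) ≠ 0 := by
    simp only [div_ne_zero_iff]
    exact ⟨⟨Complex.ofReal_ne_zero.mpr hx.ne', two_ne_zero⟩, two_ne_zero⟩
  have hc : Continuous fun τ : ℝ => ((x : ℂ)/2/2) ^ (2 * (k : ℂ) + Complex.I * τ) := by
    simp_rw [Complex.cpow_def_of_ne_zero hne]
    exact Complex.continuous_exp.comp (continuous_const.mul
      (continuous_const.add (continuous_const.mul Complex.continuous_ofReal)))
  have hg : Continuous fun τ : ℝ => (Complex.Gamma ((k : ℂ) + Complex.I * τ + 1))⁻¹ := by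
    exact Complex.differentiable_one_div_Gamma.continuous.comp
      ((continuous_const.add (continuous_const.mul Complex.continuous_ofReal)).add
        continuous_const)
  have : (fun τ : ℝ => bterm x τ k) = fun τ : ℝ =>
      ((x : ℂ)/2/2) ^ (2 * (k : ℂ) + Complex.I * τ) *
        (((Nat.factorial k : ℂ))⁻¹ * (Complex.Gamma ((k : ℂ) + Complex.I * τ + 1))⁻¹) := by
    funext τ
    rw [bterm, div_eq_mul_inv, mul_inv]
  rw [this]
  exact (hc.mul (continuous_const.mul hg)).measurable

lemma bessel_measurable (x : ℝ) (hx : 0 < x) :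
    Measurable (fun τ : ℝ => besselI (Complex.I * τ) ((x : ℂ)/2)) := by
  simp_rw [bessel_eq_tsum]
  apply measurable_of_tendsto_metrizable
    (f := fun n (τ : ℝ) => ∑ k ∈ Finset.range n, bterm x τ k)
  · exact fun n => Finset.measurable_sum _ fun k _ => bterm_measurable x hx k
  · rw [tendsto_pi_nhds]
    intro τ
    exact (bterm_summable x τ hx).hasSum.tendsto_sum_nat

lemma point_bound (x τ : ℝ) (hx : 0 < x) :
    |(besselI (Complex.I * τ) ((x : ℂ)/2)).re / Real.cosh (π * τ)| ≤
      Real.exp (x/2) / Real.sqrt (Real.cosh (π * τ)) := by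
  have hc : 0 < Real.cosh (π * τ) := Real.cosh_pos _
  have hsq : 0 < Real.sqrt (Real.cosh (π * τ)) := Real.sqrt_pos.mpr hc
  have h1 : |(besselI (Complex.I * τ) ((x : ℂ)/2)).re| ≤
      Real.exp (x/2) * Real.sqrt (Real.cosh (π * τ)) :=
    (Complex.abs_re_le_norm _).trans (bessel_abs_le x τ hx)
  rw [abs_div, abs_of_pos hc, div_le_div_iff₀ hc hsq]
  calc |(besselI (Complex.I * τ) ((x : ℂ)/2)).re| * Real.sqrt (Real.cosh (π * τ))
      ≤ (Real.exp (x/2) * Real.sqrt (Real.cosh (π * τ))) * Real.sqrt (Real.cosh (π * τ)) :=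
        mul_le_mul_of_nonneg_right h1 hsq.le
    _ = Real.exp (x/2) * Real.cosh (π * τ) := by
        rw [mul_assoc, Real.mul_self_sqrt hc.le]

theorem G_transform_bounded (g : ℝ → ℂ)
    (hg : Integrable (fun τ => ‖g τ‖ / Real.sqrt (Real.cosh (π * τ))))
    (hgm : Measurable g) (x : ℝ) (hx : 0 < x) :
    Integrable
        (fun τ : ℝ =>
          ((besselI (Complex.I * τ) ((x : ℂ) / 2)).re / Real.cosh (π * τ) : ℝ) • g τ) ∧
      ‖(Real.sqrt π * Real.exp (-x / 2) : ℝ) •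
          ∫ τ : ℝ,
            ((besselI (Complex.I * τ) ((x : ℂ) / 2)).re / Real.cosh (π * τ) : ℝ) • g τ‖ ≤
        Real.sqrt π * ∫ τ : ℝ, ‖g τ‖ / Real.sqrt (Real.cosh (π * τ)) := by
  set f : ℝ → ℂ := fun τ =>
    ((besselI (Complex.I * τ) ((x : ℂ) / 2)).re / Real.cosh (π * τ) : ℝ) • g τ with hf
  have hmeas : AEStronglyMeasurable f (volume : Measure ℝ) := by
    apply Measurable.aestronglyMeasurable
    exact (((Complex.measurable_re.comp (bessel_measurable x hx)).div
      (Real.measurable_cosh.comp (measurable_const.mul measurable_id)))).smul hgm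
  have hbound : ∀ τ : ℝ, ‖f τ‖ ≤
      Real.exp (x/2) * (‖g τ‖ / Real.sqrt (Real.cosh (π * τ))) := by
    intro τ
    rw [hf]
    simp only [norm_smul, Real.norm_eq_abs]
    calc |(besselI (Complex.I * τ) ((x : ℂ)/2)).re / Real.cosh (π * τ)| * ‖g τ‖
        ≤ (Real.exp (x/2) / Real.sqrt (Real.cosh (π * τ))) * ‖g τ‖ :=
          mul_le_mul_of_nonneg_right (point_bound x τ hx) (norm_nonneg _)
      _ = Real.exp (x/2) * (‖g τ‖ / Real.sqrt (Real.cosh (π * τ))) := by ring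
  have hint : Integrable f := by
    refine Integrable.mono' (hg.const_mul (Real.exp (x/2))) hmeas ?_
    exact ae_of_all _ hbound
  refine ⟨hint, ?_⟩
  have hnorm : ‖∫ τ : ℝ, f τ‖ ≤
      ∫ τ : ℝ, Real.exp (x/2) * (‖g τ‖ / Real.sqrt (Real.cosh (π * τ))) :=
    norm_integral_le_of_norm_le (hg.const_mul (Real.exp (x/2))) (ae_of_all _ hbound)
  rw [integral_const_mul] at hnorm
  have habs : ‖(Real.sqrt π * Real.exp (-x / 2) : ℝ) • ∫ τ : ℝ, f τ‖ =
      (Real.sqrt π * Real.exp (-x / 2)) * ‖∫ τ : ℝ, f τ‖ := by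
    rw [norm_smul, Real.norm_eq_abs]
    rw [_root_.abs_of_nonneg (show (0:ℝ) ≤ Real.sqrt π * Real.exp (-x/2) by positivity)]
  rw [habs]
  have hI : 0 ≤ ∫ τ : ℝ, ‖g τ‖ / Real.sqrt (Real.cosh (π * τ)) :=
    integral_nonneg fun τ => by positivity
  calc (Real.sqrt π * Real.exp (-x / 2)) * ‖∫ τ : ℝ, f τ‖
      ≤ (Real.sqrt π * Real.exp (-x / 2)) *
          (Real.exp (x/2) * ∫ τ : ℝ, ‖g τ‖ / Real.sqrt (Real.cosh (π * τ))) :=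
        mul_le_mul_of_nonneg_left hnorm (by positivity)
    _ = Real.sqrt π * ∫ τ : ℝ, ‖g τ‖ / Real.sqrt (Real.cosh (π * τ)) := by
        rw [show (-x/2 : ℝ) = -(x/2) by ring, Real.exp_neg]
        field_simp
end

section
/- Suppose g : ℝ → ℂ satisfies ∫_{−∞}^∞ |g(τ)| e^{(β−1/2)|τ|} dτ < ∞ for some β ∈ (0, 2π), and define u(r,θ) = √π e^{−r/2} ∫_{−∞}^∞ Re[I_{iτ}(r/2)] e^{θτ} g(τ)/cosh(πτ) dτ for r > 0 and 0 ≤ θ < β. Then for each fixed θ the integral converges absolutely, and moreover u satisfies the PDE ∂²u/∂r² + (1/r + 1) ∂u/∂r + (1/r²) ∂²u/∂θ² + u/(2r) = 0 on the wedge {(r,θ) : r > 0, 0 ≤ θ < β}. -/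
open MeasureTheory Complex Real Topology


noncomputable section LSaux

/-- coefficient in the Bessel series -/
def LSc (τ : ℝ) (k : ℕ) : ℂ := (Nat.factorial k : ℂ) * Complex.Gamma ((k : ℂ) + Complex.I * τ + 1)

/-- terms of the Bessel series, as functions of real `r > 0` -/
def LST (τ : ℝ) (k : ℕ) (r : ℝ) : ℂ :=
  Complex.exp ((2 * (k : ℂ) + Complex.I * τ) * (Real.log (r / 4) : ℂ)) / LSc τ k

/-- `|Γ(1+iτ)|` -/
def LSA (τ : ℝ) : ℝ := ‖(Complex.Gamma (1 + Complex.I * τ))‖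

lemma LS_arg_re (τ : ℝ) (k : ℕ) : ((k : ℂ) + Complex.I * τ + 1).re = k + 1 := by
  simp

lemma LS_arg_ne (τ : ℝ) (k : ℕ) : ∀ m : ℕ, (k : ℂ) + Complex.I * τ + 1 ≠ -m := by
  intro m h
  have h2 := congrArg Complex.re h
  rw [LS_arg_re] at h2
  simp only [Complex.neg_re, Complex.natCast_re] at h2
  have : (0:ℝ) < k + 1 := by positivity
  have : (0:ℝ) ≤ (m:ℝ) := by positivity
  linarith

lemma LS_arg_ne' (τ : ℝ) (k : ℕ) : (k : ℂ) + Complex.I * τ + 1 ≠ 0 := by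
  have := LS_arg_ne τ k 0
  simpa using this

lemma LS_Gamma_ne (τ : ℝ) (k : ℕ) : Complex.Gamma ((k : ℂ) + Complex.I * τ + 1) ≠ 0 :=
  Complex.Gamma_ne_zero (LS_arg_ne τ k)

lemma LSc_ne (τ : ℝ) (k : ℕ) : LSc τ k ≠ 0 :=
  mul_ne_zero (Nat.cast_ne_zero.2 (Nat.factorial_ne_zero k)) (LS_Gamma_ne τ k)

lemma LSA_pos (τ : ℝ) : 0 < LSA τ := by
  have := LS_Gamma_ne τ 0
  simp only [Nat.cast_zero, zero_add] at this
  rw [LSA, show (1 : ℂ) + Complex.I * τ = Complex.I * τ + 1 by ring]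
  exact norm_pos_iff.2 this

lemma LS_Gamma_lower (τ : ℝ) (k : ℕ) :
    (Nat.factorial k : ℝ) * LSA τ ≤ ‖(Complex.Gamma ((k : ℂ) + Complex.I * τ + 1))‖ := by
  induction k with
  | zero =>
      simp only [Nat.factorial_zero, Nat.cast_one, one_mul, Nat.cast_zero, zero_add, LSA]
      rw [show Complex.I * (τ:ℂ) + 1 = 1 + Complex.I * τ by ring]
  | succ n ih =>
      have harg : ((n+1 : ℕ) : ℂ) + Complex.I * τ + 1 = ((n : ℂ) + Complex.I * τ + 1) + 1 := by
        push_cast; ring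
      rw [harg, Complex.Gamma_add_one _ (LS_arg_ne' τ n), norm_mul]
      have h1 : (n + 1 : ℝ) ≤ ‖((n : ℂ) + Complex.I * τ + 1)‖ := by
        have := Complex.re_le_norm ((n : ℂ) + Complex.I * τ + 1)
        rw [LS_arg_re] at this
        exact this
      have h2 : (0:ℝ) ≤ (Nat.factorial n : ℝ) * LSA τ :=
        mul_nonneg (by positivity) (LSA_pos τ).le
      calc (Nat.factorial (n+1) : ℝ) * LSA τ
          = (n + 1 : ℝ) * ((Nat.factorial n : ℝ) * LSA τ) := by
            rw [Nat.factorial_succ]; push_cast; ring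
        _ ≤ ‖((n : ℂ) + Complex.I * τ + 1)‖ *
              ‖(Complex.Gamma ((n : ℂ) + Complex.I * τ + 1))‖ := by
            apply mul_le_mul h1 ih h2 (norm_nonneg _)

lemma LSc_lower (τ : ℝ) (k : ℕ) :
    (Nat.factorial k : ℝ)^2 * LSA τ ≤ ‖(LSc τ k)‖ := by
  rw [LSc, norm_mul]
  have : ‖((Nat.factorial k : ℂ))‖ = (Nat.factorial k : ℝ) := by
    rw [Complex.norm_natCast]
  rw [this]
  have := LS_Gamma_lower τ k
  have hk : (0:ℝ) < (Nat.factorial k : ℝ) := by positivity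
  nlinarith [LSA_pos τ]

lemma LS_sinh_le (x : ℝ) (hx : 0 < x) : Real.sinh x ≤ x * Real.exp x := by
  rw [Real.sinh_eq]
  have h := Real.add_one_le_exp (-(2*x))
  have key : Real.exp (-x) = Real.exp x * Real.exp (-(2*x)) := by
    rw [← Real.exp_add]; ring_nf
  nlinarith [Real.exp_pos x, mul_pos (Real.exp_pos x) hx]

lemma LSA_sq (τ : ℝ) (hτ : τ ≠ 0) : (LSA τ)^2 = π * τ / Real.sinh (π * τ) := by
  have hiτ : Complex.I * τ ≠ 0 := by
    simp [Complex.I_ne_zero, Complex.ofReal_ne_zero, hτ]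
  have hsinh : Real.sinh (π * τ) ≠ 0 := by
    rw [Real.sinh_ne_zero]
    exact mul_ne_zero Real.pi_ne_zero hτ
  have hrefl := Complex.Gamma_mul_Gamma_one_sub (Complex.I * τ)
  have hadd : Complex.Gamma (1 + Complex.I * τ) = Complex.I * τ * Complex.Gamma (Complex.I * τ) := by
    rw [show (1:ℂ) + Complex.I * τ = Complex.I * τ + 1 by ring]
    exact Complex.Gamma_add_one _ hiτ
  have hconj : (starRingEnd ℂ) (Complex.Gamma (1 + Complex.I * τ)) =
      Complex.Gamma (1 - Complex.I * τ) := by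
    rw [← Complex.Gamma_conj]
    congr 1
    simp [map_add, map_mul, Complex.conj_I, Complex.conj_ofReal]
    ring
  have hsin : Complex.sin (π * (Complex.I * τ)) = (Real.sinh (π * τ) : ℂ) * Complex.I := by
    rw [show (π : ℂ) * (Complex.I * τ) = ((π * τ : ℝ) : ℂ) * Complex.I by push_cast; ring]
    rw [Complex.sin_mul_I, Complex.ofReal_sinh]
  have key : ((LSA τ ^ 2 : ℝ) : ℂ) = ((π * τ / Real.sinh (π * τ) : ℝ) : ℂ) := by
    have h1 : ((LSA τ ^ 2 : ℝ) : ℂ) =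
        Complex.Gamma (1 + Complex.I * τ) * Complex.Gamma (1 - Complex.I * τ) := by
      rw [← hconj, Complex.mul_conj, LSA]
      norm_cast
      exact Complex.sq_norm _
    rw [h1, hadd, mul_assoc, hrefl, hsin]
    have hIne : Complex.I ≠ 0 := Complex.I_ne_zero
    have hs : (Real.sinh (π * τ) : ℂ) ≠ 0 := by exact_mod_cast Complex.ofReal_ne_zero.2 hsinh
    have hsC : Complex.sinh ((π:ℂ) * (τ:ℂ)) ≠ 0 := by
      rw [show (π:ℂ) * (τ:ℂ) = ((π * τ : ℝ) : ℂ) by push_cast; ring, ← Complex.ofReal_sinh]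
      exact hs
    push_cast
    rw [← mul_div_assoc, div_eq_div_iff (mul_ne_zero hsC Complex.I_ne_zero) hsC]
    ring
  exact_mod_cast key

lemma LS_ratio_aux (x : ℝ) (hx : 0 < x) : Real.exp (-x) ≤ x / Real.sinh x := by
  rw [le_div_iff₀ (Real.sinh_pos_iff.2 hx)]
  calc Real.exp (-x) * Real.sinh x ≤ Real.exp (-x) * (x * Real.exp x) :=
        mul_le_mul_of_nonneg_left (LS_sinh_le x hx) (Real.exp_pos _).le
    _ = x := by rw [show Real.exp (-x) * (x * Real.exp x) = Real.exp (-x) * Real.exp x * x by ring,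
          ← Real.exp_add]; simp

lemma LS_ratio (τ : ℝ) (hτ : τ ≠ 0) : Real.exp (-(π * |τ|)) ≤ π * τ / Real.sinh (π * τ) := by
  rcases lt_or_gt_of_ne hτ with h | h
  · have h1 : |τ| = -τ := abs_of_neg h
    have h2 := LS_ratio_aux (π * (-τ)) (by nlinarith [Real.pi_pos])
    rw [h1]
    have : π * -τ / Real.sinh (π * -τ) = π * τ / Real.sinh (π * τ) := by
      rw [show π * -τ = -(π * τ) by ring, Real.sinh_neg]
      rw [neg_div_neg_eq]
    rw [← this]
    convert h2 using 2

  · have h1 : |τ| = τ := abs_of_pos h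
    have h2 := LS_ratio_aux (π * τ) (by nlinarith [Real.pi_pos])
    rw [h1]
    exact h2

lemma LSA_lower (τ : ℝ) : Real.exp (-(π * |τ|) / 2) ≤ LSA τ := by
  rcases eq_or_ne τ 0 with rfl | hτ
  · simp [LSA, Complex.Gamma_one]
  · have h2 : Real.exp (-(π * |τ|) / 2) ^ 2 ≤ LSA τ ^ 2 := by
      have e1 : Real.exp (-(π * |τ|) / 2) ^ 2 = Real.exp (-(π * |τ|)) := by
        rw [← Real.exp_nat_mul]; congr 1; push_cast; ring
      rw [e1, LSA_sq τ hτ]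
      exact LS_ratio τ hτ
    have h3 := Real.sqrt_le_sqrt h2
    rwa [Real.sqrt_sq (Real.exp_pos _).le, Real.sqrt_sq (LSA_pos τ).le] at h3

lemma LSA_inv_le (τ : ℝ) : (LSA τ)⁻¹ ≤ Real.exp (π * |τ| / 2) := by
  rw [inv_le_iff_one_le_mul₀ (LSA_pos τ)]
  calc (1:ℝ) = Real.exp (π * |τ| / 2) * Real.exp (-(π * |τ|) / 2) := by
        rw [← Real.exp_add, show π * |τ| / 2 + -(π * |τ|) / 2 = 0 by ring, Real.exp_zero]
    _ ≤ Real.exp (π * |τ| / 2) * LSA τ :=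
        mul_le_mul_of_nonneg_left (LSA_lower τ) (Real.exp_pos _).le

lemma LST_exp_abs (τ : ℝ) (k : ℕ) {r : ℝ} (hr : 0 < r) :
    ‖(Complex.exp ((2 * (k : ℂ) + Complex.I * τ) * (Real.log (r / 4) : ℂ)))‖
      = (r/4) ^ (2*k) := by
  set s := Real.log (r / 4) with hs
  have h1 : (2 * (k : ℂ) + Complex.I * τ) * (s : ℂ)
      = ((2 * k * s : ℝ) : ℂ) + ((τ * s : ℝ) : ℂ) * Complex.I := by
    push_cast; ring
  rw [h1, Complex.norm_exp]
  have h2 : (((2 * k * s : ℝ) : ℂ) + ((τ * s : ℝ) : ℂ) * Complex.I).re = 2 * k * s := by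
    simp
  rw [h2]
  have h3 : Real.exp (2 * k * s) = Real.exp s ^ (2 * k) := by
    rw [← Real.exp_nat_mul]; push_cast; ring_nf
  rw [h3, hs, Real.exp_log (by positivity)]

lemma LST_abs_le (τ : ℝ) (k : ℕ) {r : ℝ} (hr : 0 < r) :
    ‖(LST τ k r)‖ ≤ (r/4) ^ (2*k) / ((Nat.factorial k : ℝ)^2 * LSA τ) := by
  rw [LST, norm_div, LST_exp_abs τ k hr]
  have hA := LSA_pos τ
  have hpos : (0:ℝ) < (Nat.factorial k : ℝ)^2 * LSA τ := by positivity
  exact div_le_div_of_nonneg_left (by positivity) hpos (LSc_lower τ k)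

lemma LST_hasDerivAt (τ : ℝ) (k : ℕ) {y : ℝ} (hy : 0 < y) :
    HasDerivAt (LST τ k) ((2 * (k : ℂ) + Complex.I * τ) / y * LST τ k y) y := by
  have h1 : HasDerivAt (fun x : ℝ => Real.log (x / 4)) (1/y) y := by
    have h0 : HasDerivAt (fun x : ℝ => x / 4) (1/4 : ℝ) y := by
      simpa using (hasDerivAt_id y).div_const 4
    have := (Real.hasDerivAt_log (by positivity : y/4 ≠ 0)).comp y h0
    refine this.congr_deriv ?_
    field_simp
  have h2 := (((h1.ofReal_comp).const_mul (2 * (k : ℂ) + Complex.I * τ)).cexp).div_const (LSc τ k)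
  refine h2.congr_deriv ?_
  rw [LST]
  field_simp [LSc_ne τ k]
  push_cast
  ring

lemma LST_succ (τ : ℝ) (k : ℕ) {r : ℝ} (hr : 0 < r) :
    4 * ((k:ℂ) + 1) * (((k:ℂ) + 1) + Complex.I * τ) * LST τ (k+1) r
      = ((r:ℂ)^2 / 4) * LST τ k r := by
  set s := Real.log (r / 4) with hs
  have hexp : Complex.exp ((2 * ((k+1 : ℕ) : ℂ) + Complex.I * τ) * (s:ℂ))
      = ((r:ℂ)/4)^2 * Complex.exp ((2 * (k : ℂ) + Complex.I * τ) * (s:ℂ)) := by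
    rw [show (2 * ((k+1 : ℕ) : ℂ) + Complex.I * τ) * (s:ℂ)
        = ((s:ℂ) + (s:ℂ)) + (2 * (k : ℂ) + Complex.I * τ) * (s:ℂ) by push_cast; ring]
    rw [Complex.exp_add, Complex.exp_add, ← Complex.ofReal_exp, hs,
      Real.exp_log (by positivity)]
    push_cast
    ring
  have hgam : Complex.Gamma (((k+1 : ℕ) : ℂ) + Complex.I * τ + 1)
      = ((k:ℂ) + Complex.I * τ + 1) * Complex.Gamma ((k:ℂ) + Complex.I * τ + 1) := by
    rw [show ((k+1 : ℕ) : ℂ) + Complex.I * τ + 1 = ((k:ℂ) + Complex.I * τ + 1) + 1 by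
      push_cast; ring]
    exact Complex.Gamma_add_one _ (LS_arg_ne' τ k)
  rw [LST, LST, LSc, LSc, hexp, hgam]
  have hf : ((Nat.factorial (k+1) : ℂ)) = ((k:ℂ)+1) * (Nat.factorial k : ℂ) := by
    rw [Nat.factorial_succ]; push_cast; ring
  rw [hf]
  have h1 : ((k:ℂ) + 1) ≠ 0 := by
    exact_mod_cast Nat.succ_ne_zero k
  have h2 := LS_arg_ne' τ k
  have h3 := LS_Gamma_ne τ k
  have h4 : ((Nat.factorial k : ℂ)) ≠ 0 := Nat.cast_ne_zero.2 (Nat.factorial_ne_zero k)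
  field_simp
  ring

/-- first-derivative term -/
def LSt1 (τ : ℝ) (k : ℕ) (r : ℝ) : ℂ := (2*(k:ℂ) + Complex.I*τ) / (r:ℂ) * LST τ k r

/-- second-derivative term -/
def LSt2 (τ : ℝ) (k : ℕ) (r : ℝ) : ℂ :=
  (2*(k:ℂ) + Complex.I*τ) * (2*(k:ℂ) + Complex.I*τ - 1) / (r:ℂ)^2 * LST τ k r

def LSB0 (τ r : ℝ) : ℂ := ∑' k, LST τ k r
def LSB1 (τ r : ℝ) : ℂ := ∑' k, LSt1 τ k r
def LSB2 (τ r : ℝ) : ℂ := ∑' k, LSt2 τ k r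
def LSQ (x : ℝ) : ℝ := ∑' k : ℕ, x^k / (Nat.factorial k)

lemma LS_le_pow2 (c : ℝ) (hc : 0 ≤ c) (k : ℕ) : c + 2*k ≤ (c+2) * 2^k := by
  induction k with
  | zero => simp
  | succ n ih =>
      have h1 : (1:ℝ) ≤ 2^n := one_le_pow₀ (by norm_num)
      have h2 : (2:ℝ) ≤ (c+2) * 2^n := by nlinarith
      calc c + 2*((n+1 : ℕ):ℝ) = (c + 2*n) + 2 := by push_cast; ring
        _ ≤ (c+2) * 2^n + (c+2) * 2^n := by linarith
        _ = (c+2) * 2^(n+1) := by ring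

lemma LS_fact_le (k : ℕ) : (1:ℝ) ≤ (Nat.factorial k : ℝ) := by
  exact_mod_cast Nat.one_le_iff_ne_zero.2 (Nat.factorial_ne_zero k)

lemma LS_absq (τ : ℝ) (k : ℕ) : ‖(2*(k:ℂ) + Complex.I*τ)‖ ≤ |τ| + 2*k := by
  calc ‖(2*(k:ℂ) + Complex.I*τ)‖
      ≤ ‖(2*(k:ℂ))‖ + ‖(Complex.I*τ)‖ := norm_add_le _ _
    _ = 2*k + |τ| := by
        simp [norm_mul, Complex.norm_two, Complex.norm_natCast, Complex.norm_I, Complex.norm_real]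
    _ = |τ| + 2*k := by ring

lemma LS_absq' (τ : ℝ) (k : ℕ) : ‖(2*(k:ℂ) + Complex.I*τ - 1)‖ ≤ |τ| + 1 + 2*k := by
  calc ‖(2*(k:ℂ) + Complex.I*τ - 1)‖
      ≤ ‖(2*(k:ℂ) + Complex.I*τ)‖ + ‖(-1 : ℂ)‖ := by
        rw [sub_eq_add_neg]; exact norm_add_le _ _
    _ ≤ (|τ| + 2*k) + 1 := by
        have := LS_absq τ k; simp only [norm_neg, norm_one]; linarith
    _ = |τ| + 1 + 2*k := by ring

section bounds

variable {τ r y : ℝ} (hr : 0 < r) (hy : y ∈ Set.Icc (r/2) (2*r))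

lemma LS_y_pos (hr : 0 < r) (hy : y ∈ Set.Icc (r/2) (2*r)) : 0 < y :=
  lt_of_lt_of_le (by linarith) hy.1

lemma LS_frac_le (τ : ℝ) (k : ℕ) (hr : 0 < r) (hy : y ∈ Set.Icc (r/2) (2*r)) :
    (y/4)^(2*k) / ((Nat.factorial k : ℝ)^2 * LSA τ)
      ≤ (r/2)^(2*k) / ((Nat.factorial k : ℝ) * LSA τ) := by
  have hy0 := LS_y_pos hr hy
  have hA := LSA_pos τ
  have hf := LS_fact_le k
  apply div_le_div₀ (by positivity) _ (by positivity) _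
  · apply pow_le_pow_left₀ (by positivity)
    linarith [hy.2]
  · nlinarith [mul_le_mul_of_nonneg_right hf (mul_nonneg (le_trans zero_le_one hf) hA.le)]

lemma LST_term0_le (τ : ℝ) (k : ℕ) (hr : 0 < r) (hy : y ∈ Set.Icc (r/2) (2*r)) :
    ‖(LST τ k y)‖ ≤ (1 / LSA τ) * (((r/2)^2)^k / (Nat.factorial k)) := by
  have hy0 := LS_y_pos hr hy
  have hA := LSA_pos τ
  have hf := LS_fact_le k
  have hfne : ((Nat.factorial k : ℝ)) ≠ 0 := by positivity
  calc ‖(LST τ k y)‖ ≤ (y/4)^(2*k) / ((Nat.factorial k : ℝ)^2 * LSA τ) :=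
        LST_abs_le τ k hy0
    _ ≤ (r/2)^(2*k) / ((Nat.factorial k : ℝ) * LSA τ) := LS_frac_le τ k hr hy
    _ = (1 / LSA τ) * (((r/2)^2)^k / (Nat.factorial k)) := by
        rw [pow_mul]; field_simp

lemma LST_term1_le (τ : ℝ) (k : ℕ) (hr : 0 < r) (hy : y ∈ Set.Icc (r/2) (2*r)) :
    ‖(LSt1 τ k y)‖ ≤ ((|τ|+2) * (2/r) / LSA τ) * ((r^2/2)^k / (Nat.factorial k)) := by
  have hy0 := LS_y_pos hr hy
  have hA := LSA_pos τ
  have hf := LS_fact_le k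
  have h2k : (0:ℝ) ≤ |τ| + 2*k := by positivity
  rw [LSt1, norm_mul, norm_div]
  have hay : ‖((y:ℂ))‖ = y := by rw [Complex.norm_real, Real.norm_eq_abs, abs_of_pos hy0]
  rw [hay]
  calc ‖(2*(k:ℂ) + Complex.I*τ)‖ / y * ‖(LST τ k y)‖
      ≤ ((|τ| + 2*k) / y) * ((y/4)^(2*k) / ((Nat.factorial k : ℝ)^2 * LSA τ)) := by
        gcongr
        · exact LS_absq τ k
        · exact LST_abs_le τ k hy0
    _ ≤ ((|τ|+2) * 2^k * (2/r)) * ((r/2)^(2*k) / ((Nat.factorial k : ℝ) * LSA τ)) := by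
        have h1 : (|τ| + 2*k) / y ≤ (|τ|+2) * 2^k * (2/r) := by
          have hb := LS_le_pow2 |τ| (abs_nonneg τ) k
          calc (|τ| + 2*k) / y ≤ (|τ| + 2*k) / (r/2) := by
                apply div_le_div_of_nonneg_left h2k (by positivity) hy.1
            _ = (|τ| + 2*k) * (2/r) := by rw [div_div_eq_mul_div, mul_div_assoc]
            _ ≤ ((|τ|+2) * 2^k) * (2/r) := by
                apply mul_le_mul_of_nonneg_right hb (by positivity)
        exact mul_le_mul h1 (LS_frac_le τ k hr hy) (by positivity) (by positivity)
    _ = ((|τ|+2) * (2/r) / LSA τ) * ((r^2/2)^k / (Nat.factorial k)) := by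
        have hfne : ((Nat.factorial k : ℝ)) ≠ 0 := by positivity
        rw [pow_mul, show ((r/2)^2 : ℝ) = r^2/4 by ring]
        rw [show ((r^2/2 : ℝ))^k = 2^k * (r^2/4)^k by
          rw [← mul_pow]; congr 1; ring]
        field_simp

lemma LST_term2_le (τ : ℝ) (k : ℕ) (hr : 0 < r) (hy : y ∈ Set.Icc (r/2) (2*r)) :
    ‖(LSt2 τ k y)‖ ≤
      ((|τ|+2) * (|τ|+3) * (4/r^2) / LSA τ) * ((r^2)^k / (Nat.factorial k)) := by
  have hy0 := LS_y_pos hr hy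
  have hA := LSA_pos τ
  have hf := LS_fact_le k
  rw [LSt2, norm_mul, norm_div, norm_mul]
  have hay : ‖(((y:ℂ))^2)‖ = y^2 := by
    rw [norm_pow, Complex.norm_real, Real.norm_eq_abs, abs_of_pos hy0]
  rw [hay]
  calc ‖(2*(k:ℂ) + Complex.I*τ)‖ * ‖(2*(k:ℂ) + Complex.I*τ - 1)‖ / y^2 *
        ‖(LST τ k y)‖
      ≤ ((|τ| + 2*k) * (|τ| + 1 + 2*k) / y^2) *
          ((y/4)^(2*k) / ((Nat.factorial k : ℝ)^2 * LSA τ)) := by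
        gcongr
        · exact LS_absq τ k
        · exact LS_absq' τ k
        · exact LST_abs_le τ k hy0
    _ ≤ (((|τ|+2) * 2^k) * ((|τ|+3) * 2^k) * (4/r^2)) *
          ((r/2)^(2*k) / ((Nat.factorial k : ℝ) * LSA τ)) := by
        have hb1 := LS_le_pow2 |τ| (abs_nonneg τ) k
        have hb2 := LS_le_pow2 (|τ|+1) (by positivity) k
        have h1 : (|τ| + 2*k) * (|τ| + 1 + 2*k) / y^2 ≤
            ((|τ|+2) * 2^k) * ((|τ|+3) * 2^k) * (4/r^2) := by
          have hnum : (|τ| + 2*k) * (|τ| + 1 + 2*k) ≤ ((|τ|+2) * 2^k) * ((|τ|+3) * 2^k) := by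
            have h3 : (|τ|+1) + 2*k ≤ ((|τ|+1)+2) * 2^k := hb2
            apply mul_le_mul hb1 (by linarith) (by positivity) (by positivity)
          calc (|τ| + 2*k) * (|τ| + 1 + 2*k) / y^2
              ≤ (|τ| + 2*k) * (|τ| + 1 + 2*k) / (r/2)^2 := by
                apply div_le_div_of_nonneg_left (by positivity) (by positivity)
                have := hy.1; nlinarith
            _ = (|τ| + 2*k) * (|τ| + 1 + 2*k) * (4/r^2) := by
                rw [show ((r/2)^2:ℝ) = r^2/4 by ring, div_div_eq_mul_div, mul_div_assoc]
            _ ≤ ((|τ|+2) * 2^k) * ((|τ|+3) * 2^k) * (4/r^2) := by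
                apply mul_le_mul_of_nonneg_right hnum (by positivity)
        exact mul_le_mul h1 (LS_frac_le τ k hr hy) (by positivity) (by positivity)
    _ = ((|τ|+2) * (|τ|+3) * (4/r^2) / LSA τ) * ((r^2)^k / (Nat.factorial k)) := by
        have hfne : ((Nat.factorial k : ℝ)) ≠ 0 := by positivity
        rw [pow_mul, show ((r/2)^2 : ℝ) = r^2/4 by ring]
        rw [show ((r^2 : ℝ))^k = (2^k * 2^k) * (r^2/4)^k by
          rw [← mul_pow, ← mul_pow]; congr 1; ring]
        field_simp

end bounds

lemma LS_summable_C (C x : ℝ) : Summable (fun k : ℕ => C * (x^k / (Nat.factorial k))) :=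
  (Real.summable_pow_div_factorial x).mul_left C

lemma LS_summable0 (τ : ℝ) {r y : ℝ} (hr : 0 < r) (hy : y ∈ Set.Icc (r/2) (2*r)) :
    Summable (fun k => LST τ k y) :=
  Summable.of_norm_bounded (LS_summable_C (1/LSA τ) ((r/2)^2))
    (fun k => by exact LST_term0_le τ k hr hy)

lemma LS_summable1 (τ : ℝ) {r y : ℝ} (hr : 0 < r) (hy : y ∈ Set.Icc (r/2) (2*r)) :
    Summable (fun k => LSt1 τ k y) :=
  Summable.of_norm_bounded (LS_summable_C ((|τ|+2) * (2/r) / LSA τ) (r^2/2))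
    (fun k => by exact LST_term1_le τ k hr hy)

lemma LS_summable2 (τ : ℝ) {r y : ℝ} (hr : 0 < r) (hy : y ∈ Set.Icc (r/2) (2*r)) :
    Summable (fun k => LSt2 τ k y) :=
  Summable.of_norm_bounded
    (LS_summable_C ((|τ|+2) * (|τ|+3) * (4/r^2) / LSA τ) (r^2))
    (fun k => by exact LST_term2_le τ k hr hy)

lemma LS_self_mem {r : ℝ} (hr : 0 < r) : r ∈ Set.Icc (r/2) (2*r) := by
  constructor <;> linarith

lemma LS_tsum_C (C x : ℝ) : ∑' k : ℕ, C * (x^k / (Nat.factorial k)) = C * LSQ x := by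
  rw [LSQ, tsum_mul_left]

lemma LSB0_abs_le (τ : ℝ) {r y : ℝ} (hr : 0 < r) (hy : y ∈ Set.Icc (r/2) (2*r)) :
    ‖(LSB0 τ y)‖ ≤ (1/LSA τ) * LSQ ((r/2)^2) := by
  rw [LSB0, ← LS_tsum_C]
  exact tsum_of_norm_bounded (LS_summable_C _ _).hasSum
    (fun k => by exact LST_term0_le τ k hr hy)

lemma LSB1_abs_le (τ : ℝ) {r y : ℝ} (hr : 0 < r) (hy : y ∈ Set.Icc (r/2) (2*r)) :
    ‖(LSB1 τ y)‖ ≤ ((|τ|+2) * (2/r) / LSA τ) * LSQ (r^2/2) := by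
  rw [LSB1, ← LS_tsum_C]
  exact tsum_of_norm_bounded (LS_summable_C _ _).hasSum
    (fun k => by exact LST_term1_le τ k hr hy)

lemma LSB2_abs_le (τ : ℝ) {r y : ℝ} (hr : 0 < r) (hy : y ∈ Set.Icc (r/2) (2*r)) :
    ‖(LSB2 τ y)‖ ≤ ((|τ|+2) * (|τ|+3) * (4/r^2) / LSA τ) * LSQ (r^2) := by
  rw [LSB2, ← LS_tsum_C]
  exact tsum_of_norm_bounded (LS_summable_C _ _).hasSum
    (fun k => by exact LST_term2_le τ k hr hy)

lemma LSt1_hasDerivAt (τ : ℝ) (k : ℕ) {y : ℝ} (hy : 0 < y) :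
    HasDerivAt (LSt1 τ k) (LSt2 τ k y) y := by
  have hyne : ((y:ℝ):ℂ) ≠ 0 := by exact_mod_cast ne_of_gt hy
  have hre : HasDerivAt (fun x : ℝ => ((x:ℝ):ℂ)) 1 y := by
    simpa using (hasDerivAt_id y).ofReal_comp
  have hnum := (LST_hasDerivAt τ k hy).const_mul (2*(k:ℂ)+Complex.I*τ)
  have hdiv := hnum.div hre hyne
  have heq : LSt1 τ k = fun x : ℝ => ((2*(k:ℂ)+Complex.I*τ) * LST τ k x) / ((x:ℝ):ℂ) := by
    funext x; rw [LSt1]; ring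
  rw [heq]
  refine hdiv.congr_deriv ?_
  rw [LSt2]
  field_simp

lemma LSB0_hasDerivAt (τ : ℝ) {r : ℝ} (hr : 0 < r) :
    HasDerivAt (fun y => LSB0 τ y) (LSB1 τ r) r := by
  have hmem : r ∈ Set.Ioo (r/2) (2*r) := by constructor <;> linarith
  exact hasDerivAt_tsum_of_isPreconnected
    (LS_summable_C ((|τ|+2) * (2/r) / LSA τ) (r^2/2)) isOpen_Ioo isPreconnected_Ioo
    (fun k y hy => LST_hasDerivAt τ k (LS_y_pos hr (Set.Ioo_subset_Icc_self hy)))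
    (fun k y hy => by
      exact LST_term1_le τ k hr (Set.Ioo_subset_Icc_self hy))
    hmem (LS_summable0 τ hr (LS_self_mem hr)) hmem

lemma LSB1_hasDerivAt (τ : ℝ) {r : ℝ} (hr : 0 < r) :
    HasDerivAt (fun y => LSB1 τ y) (LSB2 τ r) r := by
  have hmem : r ∈ Set.Ioo (r/2) (2*r) := by constructor <;> linarith
  exact hasDerivAt_tsum_of_isPreconnected
    (LS_summable_C ((|τ|+2) * (|τ|+3) * (4/r^2) / LSA τ) (r^2)) isOpen_Ioo isPreconnected_Ioo
    (fun k y hy => LSt1_hasDerivAt τ k (LS_y_pos hr (Set.Ioo_subset_Icc_self hy)))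
    (fun k y hy => by
      exact LST_term2_le τ k hr (Set.Ioo_subset_Icc_self hy))
    hmem (LS_summable1 τ hr (LS_self_mem hr)) hmem

lemma LS_ODE (τ : ℝ) {r : ℝ} (hr : 0 < r) :
    (r:ℂ)^2 * LSB2 τ r + (r:ℂ) * LSB1 τ r - (Complex.I*(τ:ℂ))^2 * LSB0 τ r
      = ((r:ℂ)^2/4) * LSB0 τ r := by
  have hS0 := LS_summable0 τ hr (LS_self_mem hr)
  have hS1 := LS_summable1 τ hr (LS_self_mem hr)
  have hS2 := LS_summable2 τ hr (LS_self_mem hr)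
  have hrne : ((r:ℝ):ℂ) ≠ 0 := by exact_mod_cast hr.ne'
  have hterm : ∀ k : ℕ, (r:ℂ)^2 * LSt2 τ k r + (r:ℂ) * LSt1 τ k r
      - (Complex.I*(τ:ℂ))^2 * LST τ k r
      = 4*(k:ℂ)*((k:ℂ) + Complex.I*τ) * LST τ k r := by
    intro k
    rw [LSt1, LSt2]
    field_simp
    ring
  have hcomb : Summable (fun k => (r:ℂ)^2 * LSt2 τ k r + (r:ℂ) * LSt1 τ k r
      - (Complex.I*(τ:ℂ))^2 * LST τ k r) :=
    ((hS2.mul_left _).add (hS1.mul_left _)).sub (hS0.mul_left _)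
  have hf : Summable (fun k : ℕ => 4*(k:ℂ)*((k:ℂ) + Complex.I*τ) * LST τ k r) :=
    hcomb.congr hterm
  have h1 : (r:ℂ)^2 * LSB2 τ r + (r:ℂ) * LSB1 τ r - (Complex.I*(τ:ℂ))^2 * LSB0 τ r
      = ∑' k, ((r:ℂ)^2 * LSt2 τ k r + (r:ℂ) * LSt1 τ k r
          - (Complex.I*(τ:ℂ))^2 * LST τ k r) := by
    rw [LSB0, LSB1, LSB2, ← tsum_mul_left, ← tsum_mul_left, ← tsum_mul_left,
      ← Summable.tsum_add (hS2.mul_left _) (hS1.mul_left _),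
      ← Summable.tsum_sub ((hS2.mul_left _).add (hS1.mul_left _)) (hS0.mul_left _)]
  have hsh : ∀ k : ℕ, 4*(((k+1:ℕ)):ℂ)*((((k+1:ℕ)):ℂ) + Complex.I*τ) * LST τ (k+1) r
      = ((r:ℂ)^2/4) * LST τ k r := by
    intro k
    have h := LST_succ τ k hr
    push_cast
    convert h using 2
  rw [h1, tsum_congr hterm, Summable.tsum_eq_zero_add hf]
  simp only [Nat.cast_zero, mul_zero, zero_mul, zero_add]
  rw [tsum_congr hsh, tsum_mul_left, LSB0]

lemma LS_ODE_re (τ : ℝ) {r : ℝ} (hr : 0 < r) :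
    r^2 * (LSB2 τ r).re + r * (LSB1 τ r).re + τ^2 * (LSB0 τ r).re
      = (r^2/4) * (LSB0 τ r).re := by
  have h := LS_ODE τ hr
  have hI : (Complex.I*(τ:ℂ))^2 = -(((τ^2 : ℝ)):ℂ) := by
    rw [mul_pow, Complex.I_sq]; push_cast; ring
  rw [hI] at h
  have h' : (((r^2 : ℝ)):ℂ) * LSB2 τ r + (((r:ℝ)):ℂ) * LSB1 τ r
      + (((τ^2 : ℝ)):ℂ) * LSB0 τ r = (((r^2/4 : ℝ)):ℂ) * LSB0 τ r := by
    push_cast at h ⊢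
    linear_combination h
  have := congrArg Complex.re h'
  simpa only [Complex.add_re, Complex.re_ofReal_mul] using this

lemma besselI_eq_LSB0 (τ : ℝ) {r : ℝ} (hr : 0 < r) :
    besselI (Complex.I * τ) ((r:ℂ)/2) = LSB0 τ r := by
  rw [besselI, LSB0]
  apply tsum_congr
  intro k
  have h4 : ((r:ℂ)/2)/2 = (((r/4 : ℝ)):ℂ) := by push_cast; ring
  rw [h4, LST, LSc]
  congr 1
  have hne : (((r/4 : ℝ)):ℂ) ≠ 0 := by
    exact_mod_cast Complex.ofReal_ne_zero.2 (by positivity : (r/4 : ℝ) ≠ 0)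
  rw [Complex.cpow_def_of_ne_zero hne, ← Complex.ofReal_log (by positivity : (0:ℝ) ≤ r/4)]
  congr 1
  ring

section meas

lemma LS_meas_tsum {f : ℝ → ℕ → ℂ} (hf : ∀ k, Measurable (fun τ => f τ k))
    (hsum : ∀ τ, Summable (f τ)) : Measurable (fun τ => ∑' k, f τ k) := by
  apply measurable_of_tendsto_metrizable
    (f := fun n (τ : ℝ) => ∑ k ∈ Finset.range n, f τ k)
    (fun n => Finset.measurable_sum _ (fun k _ => hf k))
  rw [tendsto_pi_nhds]
  intro τ
  exact (hsum τ).hasSum.tendsto_sum_nat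

lemma LS_cont_Gamma (k : ℕ) : Continuous (fun τ : ℝ => Complex.Gamma ((k:ℂ) + Complex.I * τ + 1)) := by
  rw [continuous_iff_continuousAt]
  intro τ
  have h1 : ContinuousAt Complex.Gamma ((k:ℂ) + Complex.I * τ + 1) :=
    (Complex.differentiableAt_Gamma _ (LS_arg_ne τ k)).continuousAt
  have h2 : Continuous (fun τ : ℝ => (k:ℂ) + Complex.I * τ + 1) := by fun_prop
  exact ContinuousAt.comp h1 h2.continuousAt

lemma LST_meas (k : ℕ) (r : ℝ) : Measurable (fun τ : ℝ => LST τ k r) := by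
  have h1 : Continuous (fun τ : ℝ =>
      Complex.exp ((2 * (k : ℂ) + Complex.I * τ) * (Real.log (r / 4) : ℂ))) := by
    fun_prop
  have h2 : Continuous (fun τ : ℝ => LSc τ k) := by
    unfold LSc
    exact continuous_const.mul (LS_cont_Gamma k)
  exact (h1.measurable).div h2.measurable

lemma LSt1_meas (k : ℕ) (r : ℝ) : Measurable (fun τ : ℝ => LSt1 τ k r) := by
  unfold LSt1
  apply Measurable.mul _ (LST_meas k r)
  apply Measurable.div _ measurable_const
  fun_prop

lemma LSt2_meas (k : ℕ) (r : ℝ) : Measurable (fun τ : ℝ => LSt2 τ k r) := by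
  unfold LSt2
  apply Measurable.mul _ (LST_meas k r)
  apply Measurable.div _ measurable_const
  fun_prop

lemma LSB0_meas {r : ℝ} (hr : 0 < r) : Measurable (fun τ : ℝ => LSB0 τ r) :=
  LS_meas_tsum (fun k => LST_meas k r) (fun τ => LS_summable0 τ hr (LS_self_mem hr))

lemma LSB1_meas {r : ℝ} (hr : 0 < r) : Measurable (fun τ : ℝ => LSB1 τ r) :=
  LS_meas_tsum (fun k => LSt1_meas k r) (fun τ => LS_summable1 τ hr (LS_self_mem hr))

lemma LSB2_meas {r : ℝ} (hr : 0 < r) : Measurable (fun τ : ℝ => LSB2 τ r) :=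
  LS_meas_tsum (fun k => LSt2_meas k r) (fun τ => LS_summable2 τ hr (LS_self_mem hr))

end meas

section expbounds

/-- margin -/
def LSδ (β θ : ℝ) : ℝ := min ((β-θ)/2) ((π-1)/2)

lemma LSδ_pos {β θ : ℝ} (hθβ : θ < β) : 0 < LSδ β θ :=
  lt_min (by linarith) (by nlinarith [Real.pi_gt_three])

lemma LS_cosh_lower (x : ℝ) : Real.exp |x| / 2 ≤ Real.cosh x := by
  rw [Real.cosh_eq]
  rcases abs_cases x with ⟨h1, _⟩ | ⟨h1, _⟩ <;> rw [h1] <;>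
    nlinarith [Real.exp_pos x, Real.exp_pos (-x)]

lemma LS_exp_key {β θ θ' : ℝ} (hθ0 : 0 ≤ θ) (hθβ : θ < β)
    (h1 : θ - (β-θ)/2 ≤ θ') (h2 : θ' ≤ θ + (β-θ)/2) (τ : ℝ) :
    θ'*τ - π*|τ|/2 ≤ (β - 1/2)*|τ| - LSδ β θ * |τ| := by
  have hδ1 : LSδ β θ ≤ (β-θ)/2 := min_le_left _ _
  have hδ2 : LSδ β θ ≤ (π-1)/2 := min_le_right _ _
  have hπ := Real.pi_gt_three
  rcases le_or_gt 0 τ with h | h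
  · rw [_root_.abs_of_nonneg h]
    have hco : θ' - π/2 ≤ (β - 1/2) - LSδ β θ := by linarith
    nlinarith [mul_le_mul_of_nonneg_right hco h]
  · rw [_root_.abs_of_neg h]
    have hco : -θ' - π/2 ≤ (β - 1/2) - LSδ β θ := by linarith
    nlinarith [mul_le_mul_of_nonneg_right hco (by linarith : (0:ℝ) ≤ -τ)]

lemma LS_t_exp (δ t : ℝ) (hδ : 0 < δ) (ht : 0 ≤ t) : t ≤ (1/δ) * Real.exp (δ*t) := by
  have h := Real.add_one_le_exp (δ*t)
  have h2 : δ * t ≤ Real.exp (δ*t) := by nlinarith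
  calc t = (δ*t)/δ := by field_simp
    _ ≤ Real.exp (δ*t)/δ := by gcongr
    _ = (1/δ)*Real.exp (δ*t) := by ring

lemma LS_poly1 (δ τ c : ℝ) (hδ : 0 < δ) (hc : 0 ≤ c) :
    |τ| + c ≤ (c + 1/δ) * Real.exp (δ*|τ|) := by
  have h1 := LS_t_exp δ |τ| hδ (abs_nonneg τ)
  have h2 : (1:ℝ) ≤ Real.exp (δ*|τ|) := Real.one_le_exp (by positivity)
  nlinarith

lemma LS_poly2 (δ τ : ℝ) (hδ : 0 < δ) :
    (|τ|+2)*(|τ|+3) ≤ (2 + 2/δ)*(3 + 2/δ) * Real.exp (δ*|τ|) := by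
  have he : (1:ℝ)/(δ/2) = 2/δ := by
    rw [one_div, div_eq_mul_inv, mul_inv, inv_inv]; ring
  have h1 : |τ| + 2 ≤ (2 + 2/δ) * Real.exp ((δ/2)*|τ|) := by
    have := LS_poly1 (δ/2) τ 2 (by linarith) (by norm_num)
    rwa [he] at this
  have h2 : |τ| + 3 ≤ (3 + 2/δ) * Real.exp ((δ/2)*|τ|) := by
    have := LS_poly1 (δ/2) τ 3 (by linarith) (by norm_num)
    rwa [he] at this
  calc (|τ|+2)*(|τ|+3)
      ≤ ((2 + 2/δ) * Real.exp ((δ/2)*|τ|)) * ((3 + 2/δ) * Real.exp ((δ/2)*|τ|)) :=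
        mul_le_mul h1 h2 (by positivity) (by positivity)
    _ = (2 + 2/δ)*(3 + 2/δ) * (Real.exp ((δ/2)*|τ|) * Real.exp ((δ/2)*|τ|)) := by ring
    _ = (2 + 2/δ)*(3 + 2/δ) * Real.exp (δ*|τ|) := by
        rw [← Real.exp_add, show (δ/2)*|τ| + (δ/2)*|τ| = δ*|τ| by ring]

lemma LS_sq_poly (δ τ : ℝ) (hδ : 0 < δ) :
    τ^2 ≤ (2/δ)^2 * Real.exp (δ*|τ|) := by
  have h1 : |τ| ≤ (2/δ) * Real.exp ((δ/2)*|τ|) := by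
    have := LS_t_exp (δ/2) |τ| (by linarith) (abs_nonneg τ)
    have he : (1:ℝ)/(δ/2) = 2/δ := by
      rw [one_div, div_eq_mul_inv, mul_inv, inv_inv]; ring
    rwa [he] at this
  have h2 : τ^2 = |τ| * |τ| := by rw [abs_mul_abs_self]; ring
  rw [h2]
  calc |τ| * |τ| ≤ ((2/δ) * Real.exp ((δ/2)*|τ|)) * ((2/δ) * Real.exp ((δ/2)*|τ|)) :=
        mul_le_mul h1 h1 (abs_nonneg τ) (by positivity)
    _ = (2/δ)^2 * (Real.exp ((δ/2)*|τ|) * Real.exp ((δ/2)*|τ|)) := by ring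
    _ = (2/δ)^2 * Real.exp (δ*|τ|) := by
        rw [← Real.exp_add, show (δ/2)*|τ| + (δ/2)*|τ| = δ*|τ| by ring]

lemma LS_abs_poly (δ τ : ℝ) (hδ : 0 < δ) :
    |τ| ≤ (1/δ) * Real.exp (δ*|τ|) := LS_t_exp δ |τ| hδ (abs_nonneg τ)

lemma LS_master {β θ θ' : ℝ} (hθ0 : 0 ≤ θ) (hθβ : θ < β)
    (h1 : θ - (β-θ)/2 ≤ θ') (h2 : θ' ≤ θ + (β-θ)/2) (τ : ℝ) {P K : ℝ} (hP : 0 ≤ P)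
    (hPK : P ≤ K * Real.exp (LSδ β θ * |τ|)) :
    P * ((1/LSA τ) * (Real.exp (θ'*τ) / Real.cosh (π*τ))) ≤
      2 * K * Real.exp ((β - 1/2)*|τ|) := by
  have hA := LSA_pos τ
  have hch := Real.cosh_pos (x := π*τ)
  have hK : 0 ≤ K := by nlinarith [Real.exp_pos (LSδ β θ * |τ|)]
  have hAi : (1/LSA τ) ≤ Real.exp (π*|τ|/2) := by
    rw [one_div]
    exact LSA_inv_le τ
  have hB : Real.exp (θ'*τ) / Real.cosh (π*τ) ≤ 2 * Real.exp (θ'*τ - π*|τ|) := by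
    rw [div_le_iff₀ hch]
    have hcl : Real.exp (π*|τ|)/2 ≤ Real.cosh (π*τ) := by
      have := LS_cosh_lower (π*τ)
      rwa [abs_mul, abs_of_pos Real.pi_pos] at this
    have hcl2 : Real.exp (π*|τ|) ≤ 2 * Real.cosh (π*τ) := by linarith
    calc Real.exp (θ'*τ) = Real.exp (θ'*τ - π*|τ|) * Real.exp (π*|τ|) := by
          rw [← Real.exp_add]; congr 1; ring
      _ ≤ Real.exp (θ'*τ - π*|τ|) * (2 * Real.cosh (π*τ)) :=
          mul_le_mul_of_nonneg_left hcl2 (Real.exp_pos _).le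
      _ = 2 * Real.exp (θ'*τ - π*|τ|) * Real.cosh (π*τ) := by ring
  calc P * ((1/LSA τ) * (Real.exp (θ'*τ) / Real.cosh (π*τ)))
      ≤ P * (Real.exp (π*|τ|/2) * (2*Real.exp (θ'*τ - π*|τ|))) := by
        apply mul_le_mul_of_nonneg_left _ hP
        apply mul_le_mul hAi hB (by positivity) (by positivity)
    _ = P * (2 * Real.exp (θ'*τ - π*|τ|/2)) := by
        rw [show Real.exp (π*|τ|/2) * (2*Real.exp (θ'*τ - π*|τ|))
            = 2*(Real.exp (π*|τ|/2) * Real.exp (θ'*τ - π*|τ|)) by ring,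
          ← Real.exp_add, show π*|τ|/2 + (θ'*τ - π*|τ|) = θ'*τ - π*|τ|/2 by ring]
    _ ≤ (K * Real.exp (LSδ β θ * |τ|)) * (2 * Real.exp (θ'*τ - π*|τ|/2)) :=
        mul_le_mul_of_nonneg_right hPK (by positivity)
    _ = 2 * K * Real.exp (LSδ β θ * |τ| + (θ'*τ - π*|τ|/2)) := by
        rw [Real.exp_add]; ring
    _ ≤ 2 * K * Real.exp ((β - 1/2)*|τ|) := by
        apply mul_le_mul_of_nonneg_left _ (by positivity)
        apply Real.exp_le_exp.2
        have := LS_exp_key hθ0 hθβ h1 h2 τ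
        linarith

end expbounds

section integrand

/-- weight -/
def LSw (θ τ : ℝ) : ℝ := Real.exp (θ*τ) / Real.cosh (π*τ)

def LSF0 (g : ℝ → ℂ) (θ x τ : ℝ) : ℂ := (((LSB0 τ x).re * LSw θ τ : ℝ) : ℂ) * g τ
def LSF1 (g : ℝ → ℂ) (θ x τ : ℝ) : ℂ := (((LSB1 τ x).re * LSw θ τ : ℝ) : ℂ) * g τ
def LSF2 (g : ℝ → ℂ) (θ x τ : ℝ) : ℂ := (((LSB2 τ x).re * LSw θ τ : ℝ) : ℂ) * g τ
def LSG1 (g : ℝ → ℂ) (r t τ : ℝ) : ℂ :=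
  (((LSB0 τ r).re * (τ * Real.exp (t*τ) / Real.cosh (π*τ)) : ℝ) : ℂ) * g τ
def LSG2 (g : ℝ → ℂ) (r t τ : ℝ) : ℂ :=
  (((LSB0 τ r).re * (τ^2 * Real.exp (t*τ) / Real.cosh (π*τ)) : ℝ) : ℂ) * g τ

lemma LSQ_nonneg {x : ℝ} (hx : 0 ≤ x) : 0 ≤ LSQ x :=
  tsum_nonneg (fun k => by positivity)

lemma LSw_pos (θ τ : ℝ) : 0 < LSw θ τ := div_pos (Real.exp_pos _) (Real.cosh_pos _)

lemma LS_bound_helper {β θ θ' τ : ℝ} (hθ0 : 0 ≤ θ) (hθβ : θ < β)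
    (h1 : θ - (β-θ)/2 ≤ θ') (h2 : θ' ≤ θ + (β-θ)/2)
    {a P K : ℝ} (ha : |a| ≤ P * (1/LSA τ)) (hP : 0 ≤ P)
    (hPK : P ≤ K * Real.exp (LSδ β θ * |τ|)) (z : ℂ) :
    ‖((a * (Real.exp (θ'*τ) / Real.cosh (π*τ)) : ℝ) : ℂ) * z‖
      ≤ (2*K) * (‖z‖ * Real.exp ((β - 1/2)*|τ|)) := by
  have hw : 0 < Real.exp (θ'*τ) / Real.cosh (π*τ) := div_pos (Real.exp_pos _) (Real.cosh_pos _)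
  have hmaster := LS_master hθ0 hθβ h1 h2 τ hP hPK
  calc ‖((a * (Real.exp (θ'*τ) / Real.cosh (π*τ)) : ℝ) : ℂ) * z‖
      = |a * (Real.exp (θ'*τ) / Real.cosh (π*τ))| * ‖z‖ := by
        rw [norm_mul, Complex.norm_real, Real.norm_eq_abs]
    _ = |a| * (Real.exp (θ'*τ) / Real.cosh (π*τ)) * ‖z‖ := by
        rw [abs_mul, _root_.abs_of_pos hw]
    _ ≤ (P * (1/LSA τ)) * (Real.exp (θ'*τ) / Real.cosh (π*τ)) * ‖z‖ := by
        gcongr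
    _ = (P * ((1/LSA τ) * (Real.exp (θ'*τ) / Real.cosh (π*τ)))) * ‖z‖ := by ring
    _ ≤ (2 * K * Real.exp ((β - 1/2)*|τ|)) * ‖z‖ :=
        mul_le_mul_of_nonneg_right hmaster (norm_nonneg z)
    _ = (2*K) * (‖z‖ * Real.exp ((β - 1/2)*|τ|)) := by ring

section bnd

variable {β θ θ' r x τ : ℝ} (g : ℝ → ℂ)

lemma LSF0_bound (hθ0 : 0 ≤ θ) (hθβ : θ < β)
    (h1 : θ - (β-θ)/2 ≤ θ') (h2 : θ' ≤ θ + (β-θ)/2) (hr : 0 < r)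
    (hx : x ∈ Set.Icc (r/2) (2*r)) (τ : ℝ) :
    ‖LSF0 g θ' x τ‖ ≤ (2 * LSQ ((r/2)^2)) *
      (‖(g τ)‖ * Real.exp ((β - 1/2)*|τ|)) := by
  have hQ := LSQ_nonneg (show (0:ℝ) ≤ (r/2)^2 by positivity)
  have ha : |(LSB0 τ x).re| ≤ LSQ ((r/2)^2) * (1/LSA τ) := by
    calc |(LSB0 τ x).re| ≤ ‖(LSB0 τ x)‖ := Complex.abs_re_le_norm _
      _ ≤ (1/LSA τ) * LSQ ((r/2)^2) := LSB0_abs_le τ hr hx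
      _ = LSQ ((r/2)^2) * (1/LSA τ) := by ring
  have hδ := LSδ_pos hθβ
  have hPK : LSQ ((r/2)^2) ≤ LSQ ((r/2)^2) * Real.exp (LSδ β θ * |τ|) := by
    nlinarith [Real.one_le_exp (show (0:ℝ) ≤ LSδ β θ * |τ| by positivity)]
  rw [LSF0, LSw]
  exact LS_bound_helper hθ0 hθβ h1 h2 ha hQ hPK (g τ)

lemma LSF1_bound (hθ0 : 0 ≤ θ) (hθβ : θ < β)
    (h1 : θ - (β-θ)/2 ≤ θ') (h2 : θ' ≤ θ + (β-θ)/2) (hr : 0 < r)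
    (hx : x ∈ Set.Icc (r/2) (2*r)) (τ : ℝ) :
    ‖LSF1 g θ' x τ‖ ≤ (2 * ((2 + 1/LSδ β θ) * ((2/r) * LSQ (r^2/2)))) *
      (‖(g τ)‖ * Real.exp ((β - 1/2)*|τ|)) := by
  have hδ := LSδ_pos hθβ
  have hQ := LSQ_nonneg (show (0:ℝ) ≤ r^2/2 by positivity)
  have hc : (0:ℝ) ≤ (2/r) * LSQ (r^2/2) := mul_nonneg (by positivity) hQ
  have ha : |(LSB1 τ x).re| ≤ ((|τ|+2) * ((2/r) * LSQ (r^2/2))) * (1/LSA τ) := by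
    calc |(LSB1 τ x).re| ≤ ‖(LSB1 τ x)‖ := Complex.abs_re_le_norm _
      _ ≤ ((|τ|+2) * (2/r) / LSA τ) * LSQ (r^2/2) := LSB1_abs_le τ hr hx
      _ = ((|τ|+2) * ((2/r) * LSQ (r^2/2))) * (1/LSA τ) := by ring
  have hP : (0:ℝ) ≤ (|τ|+2) * ((2/r) * LSQ (r^2/2)) :=
    mul_nonneg (by positivity) hc
  have hPK : (|τ|+2) * ((2/r) * LSQ (r^2/2)) ≤
      ((2 + 1/LSδ β θ) * ((2/r) * LSQ (r^2/2))) * Real.exp (LSδ β θ * |τ|) := by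
    have h := mul_le_mul_of_nonneg_right (LS_poly1 (LSδ β θ) τ 2 hδ (by norm_num)) hc
    calc (|τ|+2) * ((2/r) * LSQ (r^2/2))
        ≤ ((2 + 1/LSδ β θ) * Real.exp (LSδ β θ * |τ|)) * ((2/r) * LSQ (r^2/2)) := h
      _ = ((2 + 1/LSδ β θ) * ((2/r) * LSQ (r^2/2))) * Real.exp (LSδ β θ * |τ|) := by ring
  rw [LSF1, LSw]
  exact LS_bound_helper hθ0 hθβ h1 h2 ha hP hPK (g τ)

lemma LSF2_bound (hθ0 : 0 ≤ θ) (hθβ : θ < β)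
    (h1 : θ - (β-θ)/2 ≤ θ') (h2 : θ' ≤ θ + (β-θ)/2) (hr : 0 < r)
    (hx : x ∈ Set.Icc (r/2) (2*r)) (τ : ℝ) :
    ‖LSF2 g θ' x τ‖ ≤ (2 * (((2 + 2/LSδ β θ)*(3 + 2/LSδ β θ)) * ((4/r^2) * LSQ (r^2)))) *
      (‖(g τ)‖ * Real.exp ((β - 1/2)*|τ|)) := by
  have hδ := LSδ_pos hθβ
  have hQ := LSQ_nonneg (show (0:ℝ) ≤ r^2 by positivity)
  have hc : (0:ℝ) ≤ (4/r^2) * LSQ (r^2) := mul_nonneg (by positivity) hQ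
  have ha : |(LSB2 τ x).re| ≤ (((|τ|+2)*(|τ|+3)) * ((4/r^2) * LSQ (r^2))) * (1/LSA τ) := by
    calc |(LSB2 τ x).re| ≤ ‖(LSB2 τ x)‖ := Complex.abs_re_le_norm _
      _ ≤ ((|τ|+2) * (|τ|+3) * (4/r^2) / LSA τ) * LSQ (r^2) := LSB2_abs_le τ hr hx
      _ = (((|τ|+2)*(|τ|+3)) * ((4/r^2) * LSQ (r^2))) * (1/LSA τ) := by ring
  have hP : (0:ℝ) ≤ ((|τ|+2)*(|τ|+3)) * ((4/r^2) * LSQ (r^2)) :=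
    mul_nonneg (by positivity) hc
  have hPK : ((|τ|+2)*(|τ|+3)) * ((4/r^2) * LSQ (r^2)) ≤
      (((2 + 2/LSδ β θ)*(3 + 2/LSδ β θ)) * ((4/r^2) * LSQ (r^2))) *
        Real.exp (LSδ β θ * |τ|) := by
    have h := mul_le_mul_of_nonneg_right (LS_poly2 (LSδ β θ) τ hδ) hc
    calc ((|τ|+2)*(|τ|+3)) * ((4/r^2) * LSQ (r^2))
        ≤ ((2 + 2/LSδ β θ)*(3 + 2/LSδ β θ) * Real.exp (LSδ β θ * |τ|)) *
            ((4/r^2) * LSQ (r^2)) := h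
      _ = (((2 + 2/LSδ β θ)*(3 + 2/LSδ β θ)) * ((4/r^2) * LSQ (r^2))) *
            Real.exp (LSδ β θ * |τ|) := by ring
  rw [LSF2, LSw]
  exact LS_bound_helper hθ0 hθβ h1 h2 ha hP hPK (g τ)

lemma LSG1_bound (hθ0 : 0 ≤ θ) (hθβ : θ < β)
    (h1 : θ - (β-θ)/2 ≤ θ') (h2 : θ' ≤ θ + (β-θ)/2) (hr : 0 < r) (τ : ℝ) :
    ‖LSG1 g r θ' τ‖ ≤ (2 * ((1/LSδ β θ) * LSQ ((r/2)^2))) *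
      (‖(g τ)‖ * Real.exp ((β - 1/2)*|τ|)) := by
  have hδ := LSδ_pos hθβ
  have hQ := LSQ_nonneg (show (0:ℝ) ≤ (r/2)^2 by positivity)
  have ha : |(LSB0 τ r).re * τ| ≤ (|τ| * LSQ ((r/2)^2)) * (1/LSA τ) := by
    rw [abs_mul]
    calc |(LSB0 τ r).re| * |τ| ≤ ‖(LSB0 τ r)‖ * |τ| :=
          mul_le_mul_of_nonneg_right (Complex.abs_re_le_norm _) (abs_nonneg τ)
      _ ≤ ((1/LSA τ) * LSQ ((r/2)^2)) * |τ| :=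
          mul_le_mul_of_nonneg_right (LSB0_abs_le τ hr (LS_self_mem hr)) (abs_nonneg τ)
      _ = (|τ| * LSQ ((r/2)^2)) * (1/LSA τ) := by ring
  have hP : (0:ℝ) ≤ |τ| * LSQ ((r/2)^2) := mul_nonneg (abs_nonneg τ) hQ
  have hPK : |τ| * LSQ ((r/2)^2) ≤
      ((1/LSδ β θ) * LSQ ((r/2)^2)) * Real.exp (LSδ β θ * |τ|) := by
    have h := mul_le_mul_of_nonneg_right (LS_abs_poly (LSδ β θ) τ hδ) hQ
    calc |τ| * LSQ ((r/2)^2)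
        ≤ ((1/LSδ β θ) * Real.exp (LSδ β θ * |τ|)) * LSQ ((r/2)^2) := h
      _ = ((1/LSδ β θ) * LSQ ((r/2)^2)) * Real.exp (LSδ β θ * |τ|) := by ring
  rw [LSG1, show (LSB0 τ r).re * (τ * Real.exp (θ'*τ) / Real.cosh (π*τ))
      = ((LSB0 τ r).re * τ) * (Real.exp (θ'*τ) / Real.cosh (π*τ)) by ring]
  exact LS_bound_helper hθ0 hθβ h1 h2 ha hP hPK (g τ)

lemma LSG2_bound (hθ0 : 0 ≤ θ) (hθβ : θ < β)
    (h1 : θ - (β-θ)/2 ≤ θ') (h2 : θ' ≤ θ + (β-θ)/2) (hr : 0 < r) (τ : ℝ) :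
    ‖LSG2 g r θ' τ‖ ≤ (2 * ((2/LSδ β θ)^2 * LSQ ((r/2)^2))) *
      (‖(g τ)‖ * Real.exp ((β - 1/2)*|τ|)) := by
  have hδ := LSδ_pos hθβ
  have hQ := LSQ_nonneg (show (0:ℝ) ≤ (r/2)^2 by positivity)
  have ha : |(LSB0 τ r).re * τ^2| ≤ (τ^2 * LSQ ((r/2)^2)) * (1/LSA τ) := by
    rw [abs_mul, _root_.abs_of_nonneg (sq_nonneg τ)]
    calc |(LSB0 τ r).re| * τ^2 ≤ ‖(LSB0 τ r)‖ * τ^2 :=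
          mul_le_mul_of_nonneg_right (Complex.abs_re_le_norm _) (sq_nonneg τ)
      _ ≤ ((1/LSA τ) * LSQ ((r/2)^2)) * τ^2 :=
          mul_le_mul_of_nonneg_right (LSB0_abs_le τ hr (LS_self_mem hr)) (sq_nonneg τ)
      _ = (τ^2 * LSQ ((r/2)^2)) * (1/LSA τ) := by ring
  have hP : (0:ℝ) ≤ τ^2 * LSQ ((r/2)^2) := mul_nonneg (sq_nonneg τ) hQ
  have hPK : τ^2 * LSQ ((r/2)^2) ≤
      ((2/LSδ β θ)^2 * LSQ ((r/2)^2)) * Real.exp (LSδ β θ * |τ|) := by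
    have h := mul_le_mul_of_nonneg_right (LS_sq_poly (LSδ β θ) τ hδ) hQ
    calc τ^2 * LSQ ((r/2)^2)
        ≤ ((2/LSδ β θ)^2 * Real.exp (LSδ β θ * |τ|)) * LSQ ((r/2)^2) := h
      _ = ((2/LSδ β θ)^2 * LSQ ((r/2)^2)) * Real.exp (LSδ β θ * |τ|) := by ring
  rw [LSG2, show (LSB0 τ r).re * (τ^2 * Real.exp (θ'*τ) / Real.cosh (π*τ))
      = ((LSB0 τ r).re * τ^2) * (Real.exp (θ'*τ) / Real.cosh (π*τ)) by ring]
  exact LS_bound_helper hθ0 hθβ h1 h2 ha hP hPK (g τ)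

end bnd

section measint

variable {β θ r x : ℝ} {g : ℝ → ℂ}

lemma LS_meas_helper {B : ℝ → ℂ} (hB : Measurable B) {w : ℝ → ℝ} (hw : Measurable w)
    (hgm : Measurable g) : Measurable (fun τ => ((((B τ).re * w τ : ℝ)) : ℂ) * g τ) :=
  (Complex.measurable_ofReal.comp ((Complex.measurable_re.comp hB).mul hw)).mul hgm

lemma LSw_meas (θ : ℝ) : Measurable (fun τ => LSw θ τ) := by
  unfold LSw
  fun_prop

lemma LSF0_meas (hgm : Measurable g) (hx : 0 < x) (θ : ℝ) :
    Measurable (fun τ => LSF0 g θ x τ) :=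
  LS_meas_helper (LSB0_meas hx) (LSw_meas θ) hgm

lemma LSF1_meas (hgm : Measurable g) (hx : 0 < x) (θ : ℝ) :
    Measurable (fun τ => LSF1 g θ x τ) :=
  LS_meas_helper (LSB1_meas hx) (LSw_meas θ) hgm

lemma LSF2_meas (hgm : Measurable g) (hx : 0 < x) (θ : ℝ) :
    Measurable (fun τ => LSF2 g θ x τ) :=
  LS_meas_helper (LSB2_meas hx) (LSw_meas θ) hgm

lemma LSG1_meas (hgm : Measurable g) (hr : 0 < r) (t : ℝ) :
    Measurable (fun τ => LSG1 g r t τ) := by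
  apply LS_meas_helper (LSB0_meas hr) _ hgm
  fun_prop

lemma LSG2_meas (hgm : Measurable g) (hr : 0 < r) (t : ℝ) :
    Measurable (fun τ => LSG2 g r t τ) := by
  apply LS_meas_helper (LSB0_meas hr) _ hgm
  fun_prop

lemma LS_integrable_of_bound {F : ℝ → ℂ} (hF : AEStronglyMeasurable F volume) (C : ℝ)
    (hg : Integrable (fun τ => ‖(g τ)‖ * Real.exp ((β - 1/2) * |τ|)))
    (hb : ∀ τ, ‖F τ‖ ≤ C * (‖(g τ)‖ * Real.exp ((β - 1/2) * |τ|))) :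
    Integrable F := by
  apply Integrable.mono (hg.const_mul C) hF
  apply ae_of_all
  intro τ
  exact le_trans (hb τ) (le_abs_self _)

end measint

section derivs

variable {g : ℝ → ℂ} {β θ θ' r x τ t : ℝ}

lemma LSF0_hasDerivAt_r (g : ℝ → ℂ) (θ τ : ℝ) (hx : 0 < x) :
    HasDerivAt (fun y => LSF0 g θ y τ) (LSF1 g θ x τ) x := by
  have h0 := LSB0_hasDerivAt τ hx
  have h1 : HasDerivAt (fun y => (LSB0 τ y).re) (LSB1 τ x).re x := by
    exact Complex.reCLM.hasFDerivAt.comp_hasDerivAt x h0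
  exact ((h1.mul_const (LSw θ τ)).ofReal_comp).mul_const (g τ)

lemma LSF1_hasDerivAt_r (g : ℝ → ℂ) (θ τ : ℝ) (hx : 0 < x) :
    HasDerivAt (fun y => LSF1 g θ y τ) (LSF2 g θ x τ) x := by
  have h0 := LSB1_hasDerivAt τ hx
  have h1 : HasDerivAt (fun y => (LSB1 τ y).re) (LSB2 τ x).re x := by
    exact Complex.reCLM.hasFDerivAt.comp_hasDerivAt x h0
  exact ((h1.mul_const (LSw θ τ)).ofReal_comp).mul_const (g τ)

lemma LSF0_hasDerivAt_θ (g : ℝ → ℂ) (r τ t : ℝ) :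
    HasDerivAt (fun u => LSF0 g u r τ) (LSG1 g r t τ) t := by
  have hexp : HasDerivAt (fun u : ℝ => Real.exp (u*τ)) (Real.exp (t*τ) * τ) t := by
    simpa using ((hasDerivAt_id t).mul_const τ).exp
  have h3 := ((((hexp.div_const (Real.cosh (π*τ))).const_mul
    ((LSB0 τ r).re))).ofReal_comp).mul_const (g τ)
  have hshow : HasDerivAt
      (fun u => (((LSB0 τ r).re * (Real.exp (u*τ)/Real.cosh (π*τ)) : ℝ) : ℂ) * g τ)
      ((((LSB0 τ r).re * (Real.exp (t*τ) * τ / Real.cosh (π*τ)) : ℝ) : ℂ) * g τ) t := h3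
  have heq : LSG1 g r t τ
      = (((LSB0 τ r).re * (Real.exp (t*τ) * τ / Real.cosh (π*τ)) : ℝ) : ℂ) * g τ := by
    rw [LSG1]
    norm_cast
    rw [mul_comm τ (Real.exp (t*τ))]
  rw [heq]
  exact hshow

lemma LSG1_hasDerivAt_θ (g : ℝ → ℂ) (r τ t : ℝ) :
    HasDerivAt (fun u => LSG1 g r u τ) (LSG2 g r t τ) t := by
  have hexp : HasDerivAt (fun u : ℝ => Real.exp (u*τ)) (Real.exp (t*τ) * τ) t := by
    simpa using ((hasDerivAt_id t).mul_const τ).exp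
  have h3 := (((((hexp.const_mul τ).div_const (Real.cosh (π*τ))).const_mul
    ((LSB0 τ r).re))).ofReal_comp).mul_const (g τ)
  have hshow : HasDerivAt
      (fun u => (((LSB0 τ r).re * (τ * Real.exp (u*τ)/Real.cosh (π*τ)) : ℝ) : ℂ) * g τ)
      ((((LSB0 τ r).re * (τ * (Real.exp (t*τ) * τ) / Real.cosh (π*τ)) : ℝ) : ℂ) * g τ) t := h3
  have heq : LSG2 g r t τ
      = (((LSB0 τ r).re * (τ * (Real.exp (t*τ) * τ) / Real.cosh (π*τ)) : ℝ) : ℂ) * g τ := by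
    rw [LSG2]
    norm_cast
    ring_nf
  rw [heq]
  exact hshow

end derivs

section integrals

variable {g : ℝ → ℂ} {β θ θ' r : ℝ}

lemma LSF0_integrable (hgm : Measurable g)
    (hg : Integrable (fun τ => ‖(g τ)‖ * Real.exp ((β - 1/2) * |τ|)))
    (hθ0 : 0 ≤ θ) (hθβ : θ < β)
    (h1 : θ - (β-θ)/2 ≤ θ') (h2 : θ' ≤ θ + (β-θ)/2) (hr : 0 < r) :
    Integrable (LSF0 g θ' r) :=
  LS_integrable_of_bound (LSF0_meas hgm hr θ').aestronglyMeasurable _ hg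
    (fun τ => LSF0_bound g hθ0 hθβ h1 h2 hr (LS_self_mem hr) τ)

lemma LSF1_integrable (hgm : Measurable g)
    (hg : Integrable (fun τ => ‖(g τ)‖ * Real.exp ((β - 1/2) * |τ|)))
    (hθ0 : 0 ≤ θ) (hθβ : θ < β) (hr : 0 < r) :
    Integrable (LSF1 g θ r) :=
  LS_integrable_of_bound (LSF1_meas hgm hr θ).aestronglyMeasurable _ hg
    (fun τ => LSF1_bound g hθ0 hθβ (by linarith) (by linarith) hr (LS_self_mem hr) τ)

lemma LSF2_integrable (hgm : Measurable g)
    (hg : Integrable (fun τ => ‖(g τ)‖ * Real.exp ((β - 1/2) * |τ|)))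
    (hθ0 : 0 ≤ θ) (hθβ : θ < β) (hr : 0 < r) :
    Integrable (LSF2 g θ r) :=
  LS_integrable_of_bound (LSF2_meas hgm hr θ).aestronglyMeasurable _ hg
    (fun τ => LSF2_bound g hθ0 hθβ (by linarith) (by linarith) hr (LS_self_mem hr) τ)

lemma LSG1_integrable (hgm : Measurable g)
    (hg : Integrable (fun τ => ‖(g τ)‖ * Real.exp ((β - 1/2) * |τ|)))
    (hθ0 : 0 ≤ θ) (hθβ : θ < β)
    (h1 : θ - (β-θ)/2 ≤ θ') (h2 : θ' ≤ θ + (β-θ)/2) (hr : 0 < r) :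
    Integrable (LSG1 g r θ') :=
  LS_integrable_of_bound (LSG1_meas hgm hr θ').aestronglyMeasurable _ hg
    (fun τ => LSG1_bound g hθ0 hθβ h1 h2 hr τ)

lemma LSG2_integrable (hgm : Measurable g)
    (hg : Integrable (fun τ => ‖(g τ)‖ * Real.exp ((β - 1/2) * |τ|)))
    (hθ0 : 0 ≤ θ) (hθβ : θ < β)
    (h1 : θ - (β-θ)/2 ≤ θ') (h2 : θ' ≤ θ + (β-θ)/2) (hr : 0 < r) :
    Integrable (LSG2 g r θ') :=
  LS_integrable_of_bound (LSG2_meas hgm hr θ').aestronglyMeasurable _ hg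
    (fun τ => LSG2_bound g hθ0 hθβ h1 h2 hr τ)

lemma LS_ball_sub (hr : 0 < r) :
    ∀ x ∈ Metric.ball r (r/2), 0 < x ∧ x ∈ Set.Icc (r/2) (2*r) := by
  intro x hx
  rw [Metric.mem_ball, Real.dist_eq, abs_sub_lt_iff] at hx
  refine ⟨by linarith [hx.1, hx.2], by constructor <;> linarith [hx.1, hx.2]⟩

lemma LS_deriv_r0 (hgm : Measurable g)
    (hg : Integrable (fun τ => ‖(g τ)‖ * Real.exp ((β - 1/2) * |τ|)))
    (hθ0 : 0 ≤ θ) (hθβ : θ < β) (hr : 0 < r) :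
    HasDerivAt (fun x => ∫ τ, LSF0 g θ x τ) (∫ τ, LSF1 g θ r τ) r := by
  have h := hasDerivAt_integral_of_dominated_loc_of_deriv_le
    (F := fun x τ => LSF0 g θ x τ) (F' := fun x τ => LSF1 g θ x τ)
    (bound := fun τ => (2 * ((2 + 1/LSδ β θ) * ((2/r) * LSQ (r^2/2)))) *
      (‖(g τ)‖ * Real.exp ((β - 1/2)*|τ|)))
    (Metric.ball_mem_nhds r (half_pos hr))
    (Filter.eventually_of_mem (Ioi_mem_nhds hr)
      (fun x hx => (LSF0_meas hgm hx θ).aestronglyMeasurable))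
    (LSF0_integrable hgm hg hθ0 hθβ (by linarith) (by linarith) hr)
    ((LSF1_meas hgm hr θ).aestronglyMeasurable)
    (ae_of_all _ (fun τ x hx =>
      LSF1_bound g hθ0 hθβ (by linarith) (by linarith) hr (LS_ball_sub hr x hx).2 τ))
    (hg.const_mul _)
    (ae_of_all _ (fun τ x hx => LSF0_hasDerivAt_r g θ τ (LS_ball_sub hr x hx).1))
  exact h.2

lemma LS_deriv_r1 (hgm : Measurable g)
    (hg : Integrable (fun τ => ‖(g τ)‖ * Real.exp ((β - 1/2) * |τ|)))
    (hθ0 : 0 ≤ θ) (hθβ : θ < β) (hr : 0 < r) :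
    HasDerivAt (fun x => ∫ τ, LSF1 g θ x τ) (∫ τ, LSF2 g θ r τ) r := by
  have h := hasDerivAt_integral_of_dominated_loc_of_deriv_le
    (F := fun x τ => LSF1 g θ x τ) (F' := fun x τ => LSF2 g θ x τ)
    (bound := fun τ => (2 * (((2 + 2/LSδ β θ)*(3 + 2/LSδ β θ)) * ((4/r^2) * LSQ (r^2)))) *
      (‖(g τ)‖ * Real.exp ((β - 1/2)*|τ|)))
    (Metric.ball_mem_nhds r (half_pos hr))
    (Filter.eventually_of_mem (Ioi_mem_nhds hr)
      (fun x hx => (LSF1_meas hgm hx θ).aestronglyMeasurable))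
    (LSF1_integrable hgm hg hθ0 hθβ hr)
    ((LSF2_meas hgm hr θ).aestronglyMeasurable)
    (ae_of_all _ (fun τ x hx =>
      LSF2_bound g hθ0 hθβ (by linarith) (by linarith) hr (LS_ball_sub hr x hx).2 τ))
    (hg.const_mul _)
    (ae_of_all _ (fun τ x hx => LSF1_hasDerivAt_r g θ τ (LS_ball_sub hr x hx).1))
  exact h.2

lemma LS_deriv_t0 (hgm : Measurable g)
    (hg : Integrable (fun τ => ‖(g τ)‖ * Real.exp ((β - 1/2) * |τ|)))
    (hθ0 : 0 ≤ θ) (hθβ : θ < β) (hr : 0 < r) {t : ℝ}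
    (ht1 : θ - (β-θ)/4 ≤ t) (ht2 : t ≤ θ + (β-θ)/4) :
    HasDerivAt (fun u => ∫ τ, LSF0 g u r τ) (∫ τ, LSG1 g r t τ) t := by
  have hε : (0:ℝ) < (β-θ)/4 := by linarith
  have hsub : ∀ u ∈ Metric.ball t ((β-θ)/4), θ - (β-θ)/2 ≤ u ∧ u ≤ θ + (β-θ)/2 := by
    intro u hu
    rw [Metric.mem_ball, Real.dist_eq, abs_sub_lt_iff] at hu
    constructor <;> linarith [hu.1, hu.2]
  have h := hasDerivAt_integral_of_dominated_loc_of_deriv_le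
    (F := fun u τ => LSF0 g u r τ) (F' := fun u τ => LSG1 g r u τ)
    (bound := fun τ => (2 * ((1/LSδ β θ) * LSQ ((r/2)^2))) *
      (‖(g τ)‖ * Real.exp ((β - 1/2)*|τ|)))
    (Metric.ball_mem_nhds t hε)
    (Filter.Eventually.of_forall (fun u => (LSF0_meas hgm hr u).aestronglyMeasurable))
    (LSF0_integrable hgm hg hθ0 hθβ (by linarith) (by linarith) hr)
    ((LSG1_meas hgm hr t).aestronglyMeasurable)
    (ae_of_all _ (fun τ u hu =>
      LSG1_bound g hθ0 hθβ (hsub u hu).1 (hsub u hu).2 hr τ))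
    (hg.const_mul _)
    (ae_of_all _ (fun τ u hu => LSF0_hasDerivAt_θ g r τ u))
  exact h.2

lemma LS_deriv_t1 (hgm : Measurable g)
    (hg : Integrable (fun τ => ‖(g τ)‖ * Real.exp ((β - 1/2) * |τ|)))
    (hθ0 : 0 ≤ θ) (hθβ : θ < β) (hr : 0 < r) :
    HasDerivAt (fun u => ∫ τ, LSG1 g r u τ) (∫ τ, LSG2 g r θ τ) θ := by
  have hε : (0:ℝ) < (β-θ)/4 := by linarith
  have hsub : ∀ u ∈ Metric.ball θ ((β-θ)/4), θ - (β-θ)/2 ≤ u ∧ u ≤ θ + (β-θ)/2 := by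
    intro u hu
    rw [Metric.mem_ball, Real.dist_eq, abs_sub_lt_iff] at hu
    constructor <;> linarith [hu.1, hu.2]
  have h := hasDerivAt_integral_of_dominated_loc_of_deriv_le
    (F := fun u τ => LSG1 g r u τ) (F' := fun u τ => LSG2 g r u τ)
    (bound := fun τ => (2 * ((2/LSδ β θ)^2 * LSQ ((r/2)^2))) *
      (‖(g τ)‖ * Real.exp ((β - 1/2)*|τ|)))
    (Metric.ball_mem_nhds θ hε)
    (Filter.Eventually.of_forall (fun u => (LSG1_meas hgm hr u).aestronglyMeasurable))
    (LSG1_integrable hgm hg hθ0 hθβ (by linarith) (by linarith) hr)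
    ((LSG2_meas hgm hr θ).aestronglyMeasurable)
    (ae_of_all _ (fun τ u hu =>
      LSG2_bound g hθ0 hθβ (hsub u hu).1 (hsub u hu).2 hr τ))
    (hg.const_mul _)
    (ae_of_all _ (fun τ u hu => LSG1_hasDerivAt_θ g r τ u))
  exact h.2

end integrals

end integrand

end LSaux

/-- The function `u(r,θ)` given by the Lebedev–Skalskaya type integral (4.3). -/
noncomputable def LSsolution (g : ℝ → ℂ) (r θ : ℝ) : ℂ :=
  (Real.sqrt π * Real.exp (-r / 2) : ℝ) •
    ∫ τ : ℝ,
      (((besselI (Complex.I * τ) ((r : ℂ) / 2)).re * Real.exp (θ * τ) /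
          Real.cosh (π * τ) : ℝ) : ℂ) * g τ

theorem LSsolution_solves_pde (g : ℝ → ℂ) (hgm : Measurable g) (β : ℝ)
    (hβ : β ∈ Set.Ioo 0 (2 * π))
    (hg : Integrable (fun τ => ‖g τ‖ * Real.exp ((β - 1 / 2) * |τ|))) :
    (∀ θ : ℝ, 0 ≤ θ → θ < β → ∀ r : ℝ, 0 < r →
        Integrable (fun τ : ℝ =>
          (((besselI (Complex.I * τ) ((r : ℂ) / 2)).re * Real.exp (θ * τ) /
              Real.cosh (π * τ) : ℝ) : ℂ) * g τ)) ∧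
      ∀ r : ℝ, 0 < r → ∀ θ : ℝ, 0 ≤ θ → θ < β →
        deriv (deriv (fun r' : ℝ => LSsolution g r' θ)) r +
            ((1 / r + 1 : ℝ) : ℂ) * deriv (fun r' : ℝ => LSsolution g r' θ) r +
            ((1 / r ^ 2 : ℝ) : ℂ) * deriv (deriv (fun θ' : ℝ => LSsolution g r θ')) θ +
            LSsolution g r θ / (2 * (r : ℂ)) = 0 := by
  constructor
  · intro θ hθ0 hθβ r hr
    have hEq : (fun τ : ℝ => (((besselI (Complex.I * τ) ((r:ℂ)/2)).re * Real.exp (θ*τ) /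
        Real.cosh (π*τ) : ℝ):ℂ) * g τ) = LSF0 g θ r := by
      funext τ
      rw [LSF0, LSw, besselI_eq_LSB0 τ hr, mul_div_assoc]
    rw [hEq]
    exact LSF0_integrable hgm hg hθ0 hθβ (by linarith) (by linarith) hr
  · intro r hr θ hθ0 hθβ
    have hrne : ((r:ℝ):ℂ) ≠ 0 := by exact_mod_cast hr.ne'
    have hsol : ∀ x : ℝ, 0 < x → ∀ t : ℝ, LSsolution g x t
        = (Real.sqrt π * Real.exp (-x/2) : ℝ) • (∫ τ, LSF0 g t x τ) := by
      intro x hx t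
      rw [LSsolution]
      congr 1
      apply integral_congr_ae
      apply ae_of_all
      intro τ
      show (((besselI (Complex.I * τ) ((x:ℂ)/2)).re * Real.exp (t*τ) /
          Real.cosh (π*τ) : ℝ):ℂ) * g τ = LSF0 g t x τ
      rw [LSF0, LSw, besselI_eq_LSB0 τ hx, mul_div_assoc]
    have hSder : ∀ x : ℝ, HasDerivAt (fun y : ℝ => Real.sqrt π * Real.exp (-y/2))
        (-(1/2) * (Real.sqrt π * Real.exp (-x/2))) x := by
      intro x
      have h1 : HasDerivAt (fun y : ℝ => -y/2) (-1/2 : ℝ) x := by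
        simpa using ((hasDerivAt_id x).neg.div_const 2)
      have h2 := (h1.exp).const_mul (Real.sqrt π)
      refine h2.congr_deriv ?_
      ring
    have hU1 : ∀ x : ℝ, 0 < x → HasDerivAt (fun y => LSsolution g y θ)
        ((Real.sqrt π * Real.exp (-x/2)) • (∫ τ, LSF1 g θ x τ)
          + (-(1/2) * (Real.sqrt π * Real.exp (-x/2))) • (∫ τ, LSF0 g θ x τ)) x := by
      intro x hx
      have hd := (hSder x).smul (LS_deriv_r0 hgm hg hθ0 hθβ hx)
      apply hd.congr_of_eventuallyEq
      exact Filter.eventually_of_mem (Ioi_mem_nhds hx) (fun y hy => hsol y hy θ)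
    have hU2 : HasDerivAt (fun x =>
        (Real.sqrt π * Real.exp (-x/2)) • (∫ τ, LSF1 g θ x τ)
          + (-(1/2) * (Real.sqrt π * Real.exp (-x/2))) • (∫ τ, LSF0 g θ x τ))
        (((Real.sqrt π * Real.exp (-r/2)) • (∫ τ, LSF2 g θ r τ)
            + (-(1/2) * (Real.sqrt π * Real.exp (-r/2))) • (∫ τ, LSF1 g θ r τ))
          + ((-(1/2) * (Real.sqrt π * Real.exp (-r/2))) • (∫ τ, LSF1 g θ r τ)
            + (-(1/2) * (-(1/2) * (Real.sqrt π * Real.exp (-r/2)))) • (∫ τ, LSF0 g θ r τ))) r := by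
      have hB := (hSder r).smul (LS_deriv_r1 hgm hg hθ0 hθβ hr)
      have hA := (((hSder r).const_mul (-(1/2):ℝ))).smul (LS_deriv_r0 hgm hg hθ0 hθβ hr)
      exact hB.add hA
    have hd1 : deriv (fun y => LSsolution g y θ) r
        = (Real.sqrt π * Real.exp (-r/2)) • (∫ τ, LSF1 g θ r τ)
          + (-(1/2) * (Real.sqrt π * Real.exp (-r/2))) • (∫ τ, LSF0 g θ r τ) := (hU1 r hr).deriv
    have hd2 : deriv (deriv (fun y => LSsolution g y θ)) r
        = ((Real.sqrt π * Real.exp (-r/2)) • (∫ τ, LSF2 g θ r τ)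
            + (-(1/2) * (Real.sqrt π * Real.exp (-r/2))) • (∫ τ, LSF1 g θ r τ))
          + ((-(1/2) * (Real.sqrt π * Real.exp (-r/2))) • (∫ τ, LSF1 g θ r τ)
            + (-(1/2) * (-(1/2) * (Real.sqrt π * Real.exp (-r/2)))) • (∫ τ, LSF0 g θ r τ)) := by
      have hev : deriv (fun y => LSsolution g y θ) =ᶠ[𝓝 r]
          (fun x => (Real.sqrt π * Real.exp (-x/2)) • (∫ τ, LSF1 g θ x τ)
            + (-(1/2) * (Real.sqrt π * Real.exp (-x/2))) • (∫ τ, LSF0 g θ x τ)) :=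
        Filter.eventually_of_mem (Ioi_mem_nhds hr) (fun x hx => (hU1 x hx).deriv)
      rw [Filter.EventuallyEq.deriv_eq hev]
      exact hU2.deriv
    have hT1 : ∀ t : ℝ, θ - (β-θ)/4 ≤ t → t ≤ θ + (β-θ)/4 →
        HasDerivAt (fun θ' => LSsolution g r θ')
          ((Real.sqrt π * Real.exp (-r/2) : ℝ) • (∫ τ, LSG1 g r t τ)) t := by
      intro t h1 h2
      have hfunθ : (fun θ' => LSsolution g r θ')
          = fun θ' => (Real.sqrt π * Real.exp (-r/2) : ℝ) • (∫ τ, LSF0 g θ' r τ) :=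
        funext (fun u => hsol r hr u)
      rw [hfunθ]
      exact (LS_deriv_t0 hgm hg hθ0 hθβ hr h1 h2).const_smul (Real.sqrt π * Real.exp (-r/2) : ℝ)
    have hT2 : deriv (deriv (fun θ' => LSsolution g r θ')) θ
        = (Real.sqrt π * Real.exp (-r/2) : ℝ) • (∫ τ, LSG2 g r θ τ) := by
      have hev : deriv (fun θ' => LSsolution g r θ') =ᶠ[𝓝 θ]
          (fun t => (Real.sqrt π * Real.exp (-r/2) : ℝ) • (∫ τ, LSG1 g r t τ)) := by
        apply Filter.eventually_of_mem
          (Metric.ball_mem_nhds θ (show (0:ℝ) < (β-θ)/4 by linarith))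
        intro t ht
        rw [Metric.mem_ball, Real.dist_eq, abs_sub_lt_iff] at ht
        exact (hT1 t (by linarith [ht.1, ht.2]) (by linarith [ht.1, ht.2])).deriv
      rw [Filter.EventuallyEq.deriv_eq hev]
      exact ((LS_deriv_t1 hgm hg hθ0 hθβ hr).const_smul (Real.sqrt π * Real.exp (-r/2) : ℝ)).deriv
    have hptw : ∀ τ : ℝ, (r^2 : ℝ) • LSF2 g θ r τ + (r:ℝ) • LSF1 g θ r τ + LSG2 g r θ τ
        = (r^2/4 : ℝ) • LSF0 g θ r τ := by
      intro τ
      have hode := LS_ODE_re τ hr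
      have hodeC := congrArg (fun y : ℝ => (y:ℂ)) hode
      push_cast at hodeC
      simp only [LSF0, LSF1, LSF2, LSG2, LSw, Complex.real_smul, Complex.ofReal_mul,
        Complex.ofReal_div, Complex.ofReal_pow, Complex.ofReal_ofNat]
      linear_combination ((Real.exp (θ*τ) : ℂ) / (Real.cosh (π*τ) : ℂ) * g τ) * hodeC
    have hI1 := LSF1_integrable hgm hg hθ0 hθβ hr
    have hI2 := LSF2_integrable hgm hg hθ0 hθβ hr
    have hK2 := LSG2_integrable (θ' := θ) hgm hg hθ0 hθβ (by linarith) (by linarith) hr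
    have hi2 : Integrable (fun τ => (r^2 : ℝ) • LSF2 g θ r τ) := hI2.smul (r^2 : ℝ)
    have hi1 : Integrable (fun τ => (r : ℝ) • LSF1 g θ r τ) := hI1.smul (r : ℝ)
    have hi21 : Integrable (fun τ => (r^2 : ℝ) • LSF2 g θ r τ + (r : ℝ) • LSF1 g θ r τ) :=
      hi2.add hi1
    have hInt : (r^2 : ℝ) • (∫ τ, LSF2 g θ r τ) + (r:ℝ) • (∫ τ, LSF1 g θ r τ)
        + (∫ τ, LSG2 g r θ τ) = (r^2/4 : ℝ) • (∫ τ, LSF0 g θ r τ) := by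
      calc (r^2 : ℝ) • (∫ τ, LSF2 g θ r τ) + (r:ℝ) • (∫ τ, LSF1 g θ r τ)
            + (∫ τ, LSG2 g r θ τ)
          = ∫ τ, ((r^2:ℝ) • LSF2 g θ r τ + (r:ℝ) • LSF1 g θ r τ + LSG2 g r θ τ) := by
            rw [integral_add hi21 hK2, integral_add hi2 hi1,
              integral_smul, integral_smul]
        _ = ∫ τ, (r^2/4 : ℝ) • LSF0 g θ r τ := integral_congr_ae (ae_of_all _ hptw)
        _ = (r^2/4 : ℝ) • ∫ τ, LSF0 g θ r τ := integral_smul _ _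
    rw [hd2, hd1, hT2, hsol r hr θ]
    have hIntC := hInt
    simp only [Complex.real_smul] at hIntC ⊢
    push_cast at hIntC ⊢
    field_simp
    linear_combination (4 * (Real.sqrt π : ℂ) * Complex.exp (-((r:ℂ)/2))) * hIntC
end
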